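/- arXiv:2108.02528 — 7 statements merged into one kernel-verified Lean document; each statement's English description precedes it below -/
import Mathlib

section
/- Let n be a positive integer and let u, v ∈ ℝⁿ. Define the n×n matrices A, B, C by A(i,j) = 1 + u_i v_j, B(i,j) = (1 + u_i v_j)^{n-1}, and C(i,j) = (1 + u_i v_j)^n. Then (n!)^2 · det(C) = n^n · det(B) · perm(A). -/
open Matrix Finset Equiv

noncomputable section
namespace Stmt1Aux


lemma prod_succAbove {n : ℕ} (k : Fin (n+1)) (d : Fin (n+1) → ℝ) :
    ∏ i : Fin n, d (k.succAbove i) = ∏ m ∈ (univ : Finset (Fin (n+1))).erase k, d m := by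
  apply Finset.prod_bij (fun a _ => k.succAbove a)
  · intro a _; exact Finset.mem_erase.2 ⟨Fin.succAbove_ne k a, Finset.mem_univ _⟩
  · intro a _ b _ h; exact Fin.succAbove_right_injective h
  · intro m hm
    obtain ⟨a, ha⟩ := Fin.exists_succAbove_eq (Finset.mem_erase.1 hm).1
    exact ⟨a, Finset.mem_univ _, ha⟩
  · intro a _; rfl

lemma det_as_sum_sign {n : ℕ} (M : Matrix (Fin n) (Fin n) ℝ) :
    M.det = ∑ σ : Perm (Fin n), (Equiv.Perm.sign σ : ℝ) * ∏ i, M i (σ i) := by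
  rw [← Matrix.det_transpose, Matrix.det_apply']
  rfl

lemma cauchy_binet (n : ℕ) (d : Fin (n+1) → ℝ) (X Y : Matrix (Fin n) (Fin (n+1)) ℝ) :
    Matrix.det (Matrix.of fun i j : Fin n => ∑ m : Fin (n+1), d m * X i m * Y j m) =
    ∑ k : Fin (n+1), (∏ m ∈ (univ : Finset (Fin (n+1))).erase k, d m) *
      (X.submatrix id k.succAbove).det * (Y.submatrix id k.succAbove).det := by
  classical
  have step1 : Matrix.det (Matrix.of fun i j : Fin n => ∑ m : Fin (n+1), d m * X i m * Y j m)
      = ∑ r : Fin n → Fin (n+1), (∏ i, d (r i) * X i (r i)) *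
          Matrix.det (Matrix.of fun i j : Fin n => Y j (r i)) := by
    have h1 : Matrix.det (Matrix.of fun i j : Fin n => ∑ m : Fin (n+1), d m * X i m * Y j m)
        = (Matrix.detRowAlternating : (Fin n → ℝ) [⋀^Fin n]→ₗ[ℝ] ℝ).toMultilinearMap
            (fun i => ∑ m : Fin (n+1), (d m * X i m) • (fun j => Y j m)) := by
      show (Matrix.detRowAlternating : (Fin n → ℝ) [⋀^Fin n]→ₗ[ℝ] ℝ).toMultilinearMap _ = _
      congr 1
      funext i j
      simp [Finset.sum_apply, smul_eq_mul]
    rw [h1]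
    rw [(Matrix.detRowAlternating : (Fin n → ℝ) [⋀^Fin n]→ₗ[ℝ] ℝ).toMultilinearMap.map_sum
      (g := fun i m => (d m * X i m) • (fun j => Y j m))]
    apply Finset.sum_congr rfl
    intro r _
    rw [MultilinearMap.map_smul_univ, smul_eq_mul]
    congr 1
  rw [step1]
  -- restrict to injective r
  have step2 : ∑ r : Fin n → Fin (n+1), (∏ i, d (r i) * X i (r i)) *
          Matrix.det (Matrix.of fun i j : Fin n => Y j (r i))
      = ∑ r ∈ Finset.univ.filter (fun r : Fin n → Fin (n+1) => Function.Injective r),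
          (∏ i, d (r i) * X i (r i)) * Matrix.det (Matrix.of fun i j : Fin n => Y j (r i)) := by
    symm
    apply Finset.sum_filter_of_ne
    intro r _ hne
    by_contra hinj
    apply hne
    simp only [Function.Injective, not_forall] at hinj
    obtain ⟨a, b, hab, hne'⟩ := hinj
    have : Matrix.det (Matrix.of fun i j : Fin n => Y j (r i)) = 0 := by
      apply Matrix.det_zero_of_row_eq hne'
      funext j; simp [hab]
    rw [this, mul_zero]
  rw [step2]
  -- bijection with pairs (k, σ)
  have step3 : ∑ r ∈ Finset.univ.filter (fun r : Fin n → Fin (n+1) => Function.Injective r),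
          (∏ i, d (r i) * X i (r i)) * Matrix.det (Matrix.of fun i j : Fin n => Y j (r i))
      = ∑ p : Fin (n+1) × Perm (Fin n),
          (∏ i, d (p.1.succAbove (p.2 i)) * X i (p.1.succAbove (p.2 i))) *
          Matrix.det (Matrix.of fun i j : Fin n => Y j (p.1.succAbove (p.2 i))) := by
    symm
    apply Finset.sum_bij (fun (p : Fin (n+1) × Perm (Fin n)) _ => p.1.succAbove ∘ p.2)
    · intro p _
      refine Finset.mem_filter.2 ⟨Finset.mem_univ _, ?_⟩
      exact Fin.succAbove_right_injective.comp p.2.injective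
    · intro p _ q _ h
      have hk : p.1 = q.1 := by
        by_contra hne
        obtain ⟨a, ha⟩ := Fin.exists_succAbove_eq (Ne.symm hne)
        have h1 : p.1.succAbove (p.2 (p.2.symm a)) = q.1.succAbove (q.2 (p.2.symm a)) :=
          congrFun h (p.2.symm a)
        rw [Equiv.apply_symm_apply] at h1
        rw [ha] at h1
        exact Fin.succAbove_ne q.1 _ h1.symm
      have hσ : p.2 = q.2 := by
        apply Equiv.ext
        intro i
        have := congrFun h i
        rw [hk] at this
        exact Fin.succAbove_right_injective this
      exact Prod.ext hk hσ
    · intro r hr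
      have hinj : Function.Injective r := (Finset.mem_filter.1 hr).2
      have hcard : (Finset.univ.image r).card = n := by
        rw [Finset.card_image_of_injective _ hinj, Finset.card_univ, Fintype.card_fin]
      have hex : ∃ k : Fin (n+1), k ∉ Finset.univ.image r := by
        by_contra hall
        push_neg at hall
        have : (Finset.univ : Finset (Fin (n+1))) ⊆ Finset.univ.image r :=
          fun k _ => hall k
        have := Finset.card_le_card this
        simp [hcard] at this
      obtain ⟨k, hk⟩ := hex
      have hne : ∀ i, r i ≠ k := by
        intro i h
        exact hk (Finset.mem_image.2 ⟨i, Finset.mem_univ _, h⟩)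
      choose s0 hs0 using fun i => Fin.exists_succAbove_eq (hne i)
      have hs0inj : Function.Injective s0 := by
        intro a b hab
        apply hinj
        rw [← hs0 a, ← hs0 b, hab]
      refine ⟨⟨k, Equiv.ofBijective s0 (Finite.injective_iff_bijective.1 hs0inj)⟩,
        Finset.mem_univ _, ?_⟩
      funext i
      simp [Equiv.ofBijective]
      exact hs0 i
    · intro p _; rfl
  rw [step3, Fintype.sum_prod_type]
  apply Finset.sum_congr rfl
  intro k _
  have hdetY : ∀ σ : Perm (Fin n),
      Matrix.det (Matrix.of fun i j : Fin n => Y j (k.succAbove (σ i)))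
      = (Equiv.Perm.sign σ : ℝ) * ((Y.submatrix id k.succAbove)ᵀ).det := by
    intro σ
    have : (Matrix.of fun i j : Fin n => Y j (k.succAbove (σ i)))
        = ((Y.submatrix id k.succAbove)ᵀ).submatrix σ id := by
      funext i j; simp [Matrix.submatrix, Matrix.transpose]
    rw [this, Matrix.det_permute]
  calc ∑ σ : Perm (Fin n),
        (∏ i, d (k.succAbove (σ i)) * X i (k.succAbove (σ i))) *
        Matrix.det (Matrix.of fun i j : Fin n => Y j (k.succAbove (σ i)))
      = ∑ σ : Perm (Fin n),
        (∏ m ∈ (univ : Finset (Fin (n+1))).erase k, d m) *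
        ((Equiv.Perm.sign σ : ℝ) * ∏ i, X i (k.succAbove (σ i))) *
        ((Y.submatrix id k.succAbove)ᵀ).det := by
        apply Finset.sum_congr rfl
        intro σ _
        rw [hdetY σ, Finset.prod_mul_distrib]
        rw [show (∏ i, d (k.succAbove (σ i))) = ∏ i, d (k.succAbove i) from
          Equiv.prod_comp σ (fun i => d (k.succAbove i))]
        rw [prod_succAbove]
        ring
    _ = (∏ m ∈ (univ : Finset (Fin (n+1))).erase k, d m) *
          (X.submatrix id k.succAbove).det * (Y.submatrix id k.succAbove).det := by
        rw [← Finset.sum_mul, ← Finset.mul_sum]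
        rw [Matrix.det_transpose]
        congr 2
        rw [det_as_sum_sign]
        apply Finset.sum_congr rfl
        intro σ _
        congr 1


def E (n k : ℕ) (w : Fin n → ℝ) : ℝ :=
  ∑ S ∈ powersetCard k (univ : Finset (Fin n)), ∏ i ∈ S, w i

def Vd {n : ℕ} (w : Fin n → ℝ) : ℝ := (Matrix.vandermonde w).det

def Xm {n : ℕ} (k : Fin (n + 1)) (w : Fin n → ℝ) : ℝ :=
  Matrix.det (Matrix.of fun i j : Fin n => w i ^ ((k.succAbove j : Fin (n+1)) : ℕ))

lemma coeff_ext (N : ℕ) (a b : Fin N → ℝ)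
    (h : ∀ t : ℝ, ∑ j, a j * t ^ (j:ℕ) = ∑ j, b j * t ^ (j:ℕ)) : a = b := by
  have coeff : ∀ (c : Fin N → ℝ) (j : Fin N),
      (∑ i : Fin N, Polynomial.C (c i) * Polynomial.X ^ (i:ℕ)).coeff (j:ℕ) = c j := by
    intro c j
    rw [Polynomial.finset_sum_coeff]
    simp only [Polynomial.coeff_C_mul, Polynomial.coeff_X_pow]
    rw [Finset.sum_eq_single j]
    · simp
    · intro b _ hbj
      rw [if_neg (fun h => hbj (Fin.ext h.symm)), mul_zero]
    · intro h; exact absurd (Finset.mem_univ j) h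
  have hpq : (∑ i : Fin N, Polynomial.C (a i) * Polynomial.X ^ (i:ℕ))
      = ∑ i : Fin N, Polynomial.C (b i) * Polynomial.X ^ (i:ℕ) := by
    apply Polynomial.funext
    intro t
    simpa [Polynomial.eval_finset_sum] using h t
  funext j
  rw [← coeff a j, ← coeff b j, hpq]

lemma vand_cons (n : ℕ) (w : Fin n → ℝ) (t : ℝ) :
    Vd (Fin.cons t w : Fin (n+1) → ℝ) = (∏ j, (w j - t)) * Vd w := by
  unfold Vd
  rw [Matrix.det_vandermonde, Matrix.det_vandermonde, Fin.prod_univ_succ]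
  congr 1
  · rw [Fin.prod_Ioi_zero]
    simp
  · apply Finset.prod_congr rfl
    intro i _
    rw [Fin.prod_Ioi_succ]
    simp
lemma vand_cons_expand (n : ℕ) (w : Fin n → ℝ) (t : ℝ) :
    Vd (Fin.cons t w : Fin (n+1) → ℝ) = ∑ j : Fin (n+1), (-1)^(j:ℕ) * t^(j:ℕ) * Xm j w := by
  unfold Vd
  rw [Matrix.det_succ_row_zero]
  apply Finset.sum_congr rfl
  intro j _
  unfold Xm
  have h0 : vandermonde (Fin.cons t w) 0 j = t ^ (j:ℕ) := by
    simp [Matrix.vandermonde_apply]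
  have hsub : (vandermonde (Fin.cons t w)).submatrix Fin.succ j.succAbove
      = Matrix.of fun i j' : Fin n => w i ^ ((j.succAbove j' : Fin (n+1)) : ℕ) := by
    funext i j'
    simp [Matrix.vandermonde_apply, Matrix.submatrix]
  rw [h0, hsub]

lemma prod_sub_expand (n : ℕ) (w : Fin n → ℝ) (t : ℝ) :
    (∏ j, (w j - t)) = ∑ k : Fin (n+1), ((-1)^(k:ℕ) * E n (n - (k:ℕ)) w) * t^(k:ℕ) := by
  classical
  have h1 : (∏ j, (w j - t)) = ∑ S ∈ (univ : Finset (Fin n)).powerset,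
      (∏ i ∈ S, w i) * (-t) ^ (n - S.card) := by
    have := Finset.prod_add w (fun _ => -t) (univ : Finset (Fin n))
    simp only [sub_eq_add_neg]
    rw [this]
    apply Finset.sum_congr rfl
    intro S hS
    rw [Finset.prod_const]
    congr 1
    rw [Finset.card_sdiff_of_subset (Finset.mem_powerset.1 hS), Finset.card_univ, Fintype.card_fin]
  rw [h1]
  rw [← Finset.sum_fiberwise_of_maps_to (g := fun S : Finset (Fin n) => n - S.card)
    (t := Finset.range (n+1)) (fun S _ => by
      simp only [Finset.mem_range]; omega)]
  rw [Finset.sum_range fun k => _]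
  apply Finset.sum_congr rfl
  intro k _
  have hk : (k : ℕ) < n + 1 := k.isLt
  have hfil : (univ : Finset (Fin n)).powerset.filter (fun S => n - S.card = (k:ℕ))
      = powersetCard (n - (k:ℕ)) (univ : Finset (Fin n)) := by
    rw [Finset.powersetCard_eq_filter]
    apply Finset.filter_congr
    intro S hS
    have hcard : S.card ≤ n := by
      have := Finset.card_le_card (Finset.mem_powerset.1 hS)
      simpa using this
    constructor <;> intro h <;> omega
  rw [hfil]
  have hstep : ∀ S ∈ powersetCard (n - (k:ℕ)) (univ : Finset (Fin n)),
      (∏ i ∈ S, w i) * (-t) ^ (n - S.card)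
      = (∏ i ∈ S, w i) * ((-1)^(k:ℕ) * t^(k:ℕ)) := by
    intro S hS
    have hcard := (Finset.mem_powersetCard.1 hS).2
    have hkn : (k:ℕ) ≤ n := by omega
    have : n - S.card = (k:ℕ) := by omega
    rw [this, neg_pow]
  rw [Finset.sum_congr rfl hstep, ← Finset.sum_mul]
  unfold E
  ring


lemma schur (n : ℕ) (k : Fin (n + 1)) (w : Fin n → ℝ) :
    Xm k w = E n (n - (k : ℕ)) w * Vd w := by
  have h : ∀ t : ℝ, ∑ j : Fin (n+1), ((-1)^(j:ℕ) * Xm j w) * t^(j:ℕ)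
      = ∑ j : Fin (n+1), ((-1)^(j:ℕ) * (E n (n - (j:ℕ)) w * Vd w)) * t^(j:ℕ) := by
    intro t
    have h1 := vand_cons_expand n w t
    have h2 := vand_cons n w t
    rw [prod_sub_expand] at h2
    calc ∑ j : Fin (n+1), ((-1)^(j:ℕ) * Xm j w) * t^(j:ℕ)
        = Vd (Fin.cons t w) := by
          rw [h1]; apply Finset.sum_congr rfl; intro j _; ring
      _ = _ := by
          rw [h2, Finset.sum_mul]; apply Finset.sum_congr rfl; intro j _; ring
  have hco := congrFun (coeff_ext (n+1)
    (fun j => (-1)^(j:ℕ) * Xm j w)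
    (fun j => (-1)^(j:ℕ) * (E n (n - (j:ℕ)) w * Vd w)) h) k
  have hne : ((-1:ℝ))^(k:ℕ) ≠ 0 := pow_ne_zero _ (by norm_num)
  exact mul_left_cancel₀ hne hco



lemma exists_perm_image (n : ℕ) (S T : Finset (Fin n)) (h : S.card = T.card) :
    ∃ τ : Perm (Fin n), S.image τ = T := by
  classical
  have hcard : Fintype.card {x // x ∈ S} = Fintype.card {x // x ∈ T} := by
    simp [Fintype.card_coe, h]
  have e : {x // x ∈ S} ≃ {x // x ∈ T} := Fintype.equivOfCardEq hcard
  refine ⟨e.extendSubtype, ?_⟩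
  apply Finset.eq_of_subset_of_card_le
  · intro x hx
    obtain ⟨a, ha, rfl⟩ := Finset.mem_image.1 hx
    exact e.extendSubtype_mem a ha
  · rw [Finset.card_image_of_injective _ e.extendSubtype.injective, h]

lemma fiber_card_eq (n : ℕ) (S T : Finset (Fin n)) (h : S.card = T.card) :
    (univ.filter fun σ : Perm (Fin n) => S.image σ = T).card
      = (univ.filter fun σ : Perm (Fin n) => S.image σ = S).card := by
  classical
  obtain ⟨τ, hτ⟩ := exists_perm_image n S T h
  apply Finset.card_bij' (fun σ _ => τ⁻¹ * σ) (fun σ _ => τ * σ)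
  · intro σ hσ
    have hσ' := (Finset.mem_filter.1 hσ).2
    refine Finset.mem_filter.2 ⟨Finset.mem_univ _, ?_⟩
    have h2 : Finset.image (⇑(τ⁻¹ * σ)) S = Finset.image (⇑(τ⁻¹)) (Finset.image (⇑σ) S) := by
      rw [Finset.image_image]; rfl
    rw [h2, hσ', ← hτ, Finset.image_image]
    have h3 : (⇑(τ⁻¹)) ∘ (⇑τ) = id := by funext x; simp
    rw [h3, Finset.image_id]
  · intro σ hσ
    have hσ' := (Finset.mem_filter.1 hσ).2
    refine Finset.mem_filter.2 ⟨Finset.mem_univ _, ?_⟩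
    have h2 : Finset.image (⇑(τ * σ)) S = Finset.image (⇑τ) (Finset.image (⇑σ) S) := by
      rw [Finset.image_image]; rfl
    rw [h2, hσ', hτ]
  · intro σ _; simp [mul_assoc]
  · intro σ _; simp [mul_assoc]

lemma fiber_count (n : ℕ) (S : Finset (Fin n)) :
    (univ.filter fun σ : Perm (Fin n) => S.image σ = S).card
      = S.card.factorial * (n - S.card).factorial := by
  classical
  have hSn : S.card ≤ n := by
    simpa using Finset.card_le_card (Finset.subset_univ S)
  have htot : (univ : Finset (Perm (Fin n))).card
      = ∑ T ∈ powersetCard S.card (univ : Finset (Fin n)),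
        (univ.filter fun σ : Perm (Fin n) => S.image σ = T).card := by
    apply Finset.card_eq_sum_card_fiberwise
    intro σ _
    rw [Finset.mem_coe, Finset.mem_powersetCard]
    exact ⟨Finset.subset_univ _, Finset.card_image_of_injective _ σ.injective⟩
  have hconst : ∀ T ∈ powersetCard S.card (univ : Finset (Fin n)),
      (univ.filter fun σ : Perm (Fin n) => S.image σ = T).card
        = (univ.filter fun σ : Perm (Fin n) => S.image σ = S).card := by
    intro T hT
    exact fiber_card_eq n S T ((Finset.mem_powersetCard.1 hT).2).symm
  rw [Finset.sum_congr rfl hconst, Finset.sum_const, Finset.card_powersetCard,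
    smul_eq_mul] at htot
  simp only [Finset.card_univ, Fintype.card_fin, Fintype.card_perm] at htot
  have hfac := Nat.choose_mul_factorial_mul_factorial hSn
  have hpos : 0 < n.choose S.card := Nat.choose_pos hSn
  apply Nat.eq_of_mul_eq_mul_left hpos
  rw [← htot]
  rw [← hfac]
  ring

lemma sum_perm_prod (n : ℕ) (u : Fin n → ℝ) (S : Finset (Fin n)) :
    ∑ σ : Perm (Fin n), ∏ i ∈ S, u (σ i)
      = (S.card.factorial * (n - S.card).factorial : ℕ) * E n S.card u := by
  classical
  have h1 : ∀ σ : Perm (Fin n), ∏ i ∈ S, u (σ i) = ∏ j ∈ S.image σ, u j := by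
    intro σ
    rw [Finset.prod_image (fun a _ b _ hab => σ.injective hab)]
  rw [Finset.sum_congr rfl (fun σ _ => h1 σ)]
  rw [← Finset.sum_fiberwise_of_maps_to (g := fun σ : Perm (Fin n) => S.image σ)
    (t := powersetCard S.card (univ : Finset (Fin n))) (fun σ _ => by
      rw [Finset.mem_powersetCard]
      exact ⟨Finset.subset_univ _, Finset.card_image_of_injective _ σ.injective⟩)]
  have h2 : ∀ T ∈ powersetCard S.card (univ : Finset (Fin n)),
      ∑ σ ∈ univ.filter (fun σ : Perm (Fin n) => S.image σ = T), ∏ j ∈ S.image σ, u j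
      = (S.card.factorial * (n - S.card).factorial : ℕ) * ∏ j ∈ T, u j := by
    intro T hT
    have : ∀ σ ∈ univ.filter (fun σ : Perm (Fin n) => S.image σ = T),
        ∏ j ∈ S.image σ, u j = ∏ j ∈ T, u j := by
      intro σ hσ
      rw [(Finset.mem_filter.1 hσ).2]
    rw [Finset.sum_congr rfl this, Finset.sum_const]
    rw [fiber_card_eq n S T ((Finset.mem_powersetCard.1 hT).2).symm, fiber_count]
    simp [nsmul_eq_mul]
  rw [Finset.sum_congr rfl h2, ← Finset.mul_sum]
  unfold E
  push_cast
  ring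

lemma perm_expand (n : ℕ) (u v : Fin n → ℝ) (A : Matrix (Fin n) (Fin n) ℝ)
    (hA : ∀ i j, A i j = 1 + u i * v j) :
    A.permanent = ∑ k : Fin (n+1),
      ((k : ℕ).factorial * (n - (k : ℕ)).factorial : ℝ) * E n k u * E n k v := by
  classical
  unfold Matrix.permanent
  have h1 : ∀ σ : Perm (Fin n), ∏ i, A (σ i) i
      = ∑ S ∈ (univ : Finset (Fin n)).powerset,
          (∏ i ∈ S, v i) * ∏ i ∈ S, u (σ i) := by
    intro σ
    have : ∀ i, A (σ i) i = (u (σ i) * v i) + 1 := by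
      intro i; rw [hA]; ring
    rw [Finset.prod_congr rfl (fun i _ => this i), Finset.prod_add]
    apply Finset.sum_congr rfl
    intro S _
    rw [Finset.prod_const_one, mul_one, Finset.prod_mul_distrib]
    ring
  rw [Finset.sum_congr rfl (fun σ _ => h1 σ), Finset.sum_comm]
  have h2 : ∀ S ∈ (univ : Finset (Fin n)).powerset,
      ∑ σ : Perm (Fin n), (∏ i ∈ S, v i) * ∏ i ∈ S, u (σ i)
      = (∏ i ∈ S, v i) * ((S.card.factorial * (n - S.card).factorial : ℕ) * E n S.card u) := by
    intro S _
    rw [← Finset.mul_sum, sum_perm_prod]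
  rw [Finset.sum_congr rfl h2]
  -- group by card
  rw [← Finset.sum_fiberwise_of_maps_to (g := fun S : Finset (Fin n) => S.card)
    (t := Finset.range (n+1)) (fun S hS => by
      rw [Finset.mem_range]
      show S.card < n + 1
      have := Finset.card_le_card (Finset.mem_powerset.1 hS)
      simp only [Finset.card_univ, Fintype.card_fin] at this
      omega)]
  rw [Finset.sum_range fun k => _]
  apply Finset.sum_congr rfl
  intro k _
  have hfil : (univ : Finset (Fin n)).powerset.filter (fun S => S.card = (k:ℕ))
      = powersetCard (k:ℕ) (univ : Finset (Fin n)) := by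
    rw [Finset.powersetCard_eq_filter]
  rw [hfil]
  have h3 : ∀ S ∈ powersetCard (k:ℕ) (univ : Finset (Fin n)),
      (∏ i ∈ S, v i) * ((S.card.factorial * (n - S.card).factorial : ℕ) * E n S.card u)
      = ((k:ℕ).factorial * (n - (k:ℕ)).factorial : ℝ) * E n k u * (∏ i ∈ S, v i) := by
    intro S hS
    rw [(Finset.mem_powersetCard.1 hS).2]
    push_cast
    ring
  rw [Finset.sum_congr rfl h3, ← Finset.mul_sum]
  unfold E
  ring


lemma detB (n : ℕ) (hn : 0 < n) (u v : Fin n → ℝ) (B : Matrix (Fin n) (Fin n) ℝ)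
    (hB : ∀ i j, B i j = (1 + u i * v j) ^ (n - 1)) :
    B.det = (∏ m : Fin n, ((n-1).choose (m : ℕ) : ℝ)) * Vd u * Vd v := by
  have hBeq : B = vandermonde u * diagonal (fun m : Fin n => ((n-1).choose (m:ℕ) : ℝ))
      * (vandermonde v)ᵀ := by
    ext i j
    rw [hB]
    rw [Matrix.mul_apply]
    have : ∀ m : Fin n, (vandermonde u * diagonal (fun m : Fin n => ((n-1).choose (m:ℕ) : ℝ))) i m
        * (vandermonde v)ᵀ m j
        = (u i * v j) ^ (m:ℕ) * 1 ^ ((n-1) - (m:ℕ)) * ((n-1).choose (m:ℕ) : ℝ) := by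
      intro m
      rw [Matrix.mul_apply]
      simp [Matrix.diagonal_apply, Finset.sum_ite_eq', vandermonde_apply, mul_pow]
      ring
    rw [Finset.sum_congr rfl (fun m _ => this m)]
    rw [Fin.sum_univ_eq_sum_range (fun m => (u i * v j) ^ m * 1 ^ ((n-1) - m) * ((n-1).choose m : ℝ))]
    rw [show Finset.range n = Finset.range ((n-1)+1) by rw [Nat.sub_add_cancel hn], ← add_pow]
    rw [add_comm]
  rw [hBeq, Matrix.det_mul, Matrix.det_mul, Matrix.det_diagonal, Matrix.det_transpose]
  unfold Vd; ring


lemma pointwise (n m : ℕ) (h : m < n) : (n - m) * n.choose m = n * (n-1).choose m := by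
  have h1 : n * (n-1).choose m = n.choose (m+1) * (m+1) := by
    have := Nat.add_one_mul_choose_eq (n-1) m
    rwa [Nat.sub_add_cancel (by omega)] at this
  rw [h1, Nat.choose_succ_right_eq, Nat.mul_comm]

lemma key_nat (n : ℕ) :
    n.factorial * ∏ m : Fin (n+1), n.choose (m : ℕ) =
      n ^ n * ∏ m : Fin n, (n-1).choose (m : ℕ) := by
  rw [Fin.prod_univ_castSucc]
  simp only [Fin.coe_castSucc, Fin.val_last, Nat.choose_self, mul_one]
  have hfac : n.factorial = ∏ m : Fin n, (n - (m:ℕ)) := by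
    rw [Fin.prod_univ_eq_prod_range, ← Finset.prod_range_reflect]
    rw [← Finset.prod_range_add_one_eq_factorial]
    apply Finset.prod_congr rfl
    intro i hi; simp at hi; omega
  rw [hfac, ← Finset.prod_mul_distrib]
  have : ∀ m : Fin n, (n - (m:ℕ)) * n.choose (m:ℕ) = n * (n-1).choose (m:ℕ) := by
    intro m; exact pointwise n m m.isLt
  rw [Finset.prod_congr rfl (fun m _ => this m), Finset.prod_mul_distrib]
  simp [Finset.prod_const]

lemma detC (n : ℕ) (u v : Fin n → ℝ) (C : Matrix (Fin n) (Fin n) ℝ)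
    (hC : ∀ i j, C i j = (1 + u i * v j) ^ n) :
    C.det = ∑ k : Fin (n+1), (∏ m ∈ (univ : Finset (Fin (n+1))).erase k, (n.choose (m:ℕ) : ℝ)) *
      (E n (n - (k:ℕ)) u * Vd u) * (E n (n - (k:ℕ)) v * Vd v) := by
  have hCeq : C = Matrix.of fun i j : Fin n => ∑ m : Fin (n+1),
      (n.choose (m:ℕ) : ℝ) * ((Matrix.of fun i (m : Fin (n+1)) => u i ^ (m:ℕ)) i m)
        * ((Matrix.of fun j (m : Fin (n+1)) => v j ^ (m:ℕ)) j m) := by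
    ext i j
    rw [hC, Matrix.of_apply]
    have h1 : ∑ m : Fin (n+1),
        (n.choose (m:ℕ) : ℝ) * ((Matrix.of fun i (m : Fin (n+1)) => u i ^ (m:ℕ)) i m)
          * ((Matrix.of fun j (m : Fin (n+1)) => v j ^ (m:ℕ)) j m)
        = ∑ m ∈ Finset.range (n+1), (u i * v j) ^ m * 1 ^ (n - m) * (n.choose m : ℝ) := by
      simp only [Matrix.of_apply]
      rw [Fin.sum_univ_eq_sum_range
        (fun m => (n.choose m : ℝ) * u i ^ m * v j ^ m)]
      apply Finset.sum_congr rfl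
      intro m _
      rw [mul_pow, one_pow]
      ring
    rw [h1, ← add_pow, add_comm]
  rw [hCeq, cauchy_binet n (fun m => (n.choose (m:ℕ) : ℝ))
    (Matrix.of fun i (m : Fin (n+1)) => u i ^ (m:ℕ))
    (Matrix.of fun j (m : Fin (n+1)) => v j ^ (m:ℕ))]
  apply Finset.sum_congr rfl
  intro k _
  have hXu : ((Matrix.of fun i (m : Fin (n+1)) => u i ^ (m:ℕ)).submatrix id k.succAbove).det
      = Xm k u := rfl
  have hXv : ((Matrix.of fun j (m : Fin (n+1)) => v j ^ (m:ℕ)).submatrix id k.succAbove).det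
      = Xm k v := rfl
  rw [hXu, hXv, schur, schur]

lemma coef_id (n : ℕ) (k : Fin (n+1)) :
    ((n.factorial:ℝ))^2 * (∏ m ∈ (univ : Finset (Fin (n+1))).erase k, (n.choose (m:ℕ) : ℝ))
    = (n:ℝ)^n * (∏ m : Fin n, ((n-1).choose (m:ℕ) : ℝ)) *
      (((n - (k:ℕ)).factorial : ℝ) * (((k:ℕ)).factorial : ℝ)) := by
  have hk : (k:ℕ) ≤ n := by omega
  have hpos : (0:ℝ) < (n.choose (k:ℕ) : ℝ) := by exact_mod_cast Nat.choose_pos hk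
  apply mul_right_cancel₀ (ne_of_gt hpos)
  have hL : (n.factorial:ℝ)^2 * (∏ m ∈ (univ : Finset (Fin (n+1))).erase k, (n.choose (m:ℕ):ℝ))
        * (n.choose (k:ℕ):ℝ)
      = (n.factorial:ℝ)^2 * ∏ m : Fin (n+1), (n.choose (m:ℕ):ℝ) := by
    rw [mul_assoc, Finset.prod_erase_mul _ _ (Finset.mem_univ k)]
  rw [hL]
  have h2 : n.choose (k:ℕ) * (k:ℕ).factorial * (n - (k:ℕ)).factorial = n.factorial :=
    Nat.choose_mul_factorial_mul_factorial hk
  have hnat : n.factorial^2 * ∏ m : Fin (n+1), n.choose (m:ℕ)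
      = n^n * (∏ m : Fin n, (n-1).choose (m:ℕ))
        * ((n - (k:ℕ)).factorial * (k:ℕ).factorial * n.choose (k:ℕ)) := by
    calc n.factorial^2 * ∏ m : Fin (n+1), n.choose (m:ℕ)
        = n.factorial * (n.factorial * ∏ m : Fin (n+1), n.choose (m:ℕ)) := by ring
      _ = n.factorial * (n ^ n * ∏ m : Fin n, (n-1).choose (m:ℕ)) := by rw [key_nat n]
      _ = _ := by rw [← h2]; ring
  calc (n.factorial:ℝ)^2 * ∏ m : Fin (n+1), (n.choose (m:ℕ):ℝ)
      = ((n.factorial^2 * ∏ m : Fin (n+1), n.choose (m:ℕ) : ℕ) : ℝ) := by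
        push_cast; ring
    _ = ((n^n * (∏ m : Fin n, (n-1).choose (m:ℕ))
        * ((n - (k:ℕ)).factorial * (k:ℕ).factorial * n.choose (k:ℕ)) : ℕ) : ℝ) := by
        rw [hnat]
    _ = _ := by push_cast; ring

end Stmt1Aux
end

theorem stmt_1 (n : ℕ) (hn : 0 < n) (u v : Fin n → ℝ)
    (A B C : Matrix (Fin n) (Fin n) ℝ)
    (hA : ∀ i j, A i j = 1 + u i * v j)
    (hB : ∀ i j, B i j = (1 + u i * v j) ^ (n - 1))
    (hC : ∀ i j, C i j = (1 + u i * v j) ^ n) :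
    ((n.factorial : ℝ)) ^ 2 * C.det = (n : ℝ) ^ n * B.det * A.permanent := by
  classical
  rw [Stmt1Aux.detC n u v C hC, Stmt1Aux.detB n hn u v B hB, Stmt1Aux.perm_expand n u v A hA]
  rw [Finset.mul_sum]
  rw [← Equiv.sum_comp (Fin.revPerm : Equiv.Perm (Fin (n+1)))
      (fun k => ((n.factorial:ℝ))^2 *
        ((∏ m ∈ (univ : Finset (Fin (n+1))).erase k, (n.choose (m:ℕ):ℝ)) *
          (Stmt1Aux.E n (n-(k:ℕ)) u * Stmt1Aux.Vd u) *
          (Stmt1Aux.E n (n-(k:ℕ)) v * Stmt1Aux.Vd v)))]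
  rw [Finset.mul_sum]
  apply Finset.sum_congr rfl
  intro k _
  have hk : (k:ℕ) ≤ n := by omega
  have hrev : ((Fin.revPerm k : Fin (n+1)) : ℕ) = n - (k:ℕ) := by
    simp [Fin.val_rev]
  rw [hrev, show n - (n - (k:ℕ)) = (k:ℕ) from by omega]
  have hc := Stmt1Aux.coef_id n (Fin.revPerm k)
  rw [hrev, show n - (n - (k:ℕ)) = (k:ℕ) from by omega] at hc
  linear_combination (Stmt1Aux.E n (k:ℕ) u * Stmt1Aux.Vd u *
    (Stmt1Aux.E n (k:ℕ) v * Stmt1Aux.Vd v)) * hc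
end

section
/- Let n be a positive integer and let u, v ∈ ℝⁿ. If B is the n×n matrix with entries B(i,j) = (1 + u_i v_j)^{n-1}, then det(B) = Δ(u) · Δ(v) · ∏_{j=0}^{n-1} C(n-1, j), where C(n-1, j) denotes the binomial coefficient (n-1 choose j). -/
open Matrix

/-- The Vandermonde polynomial `∏_{i < j} (x_j - x_i)` of a vector. -/
noncomputable def vmd {n : ℕ} (x : Fin n → ℝ) : ℝ :=
  ∏ i : Fin n, ∏ j ∈ Finset.Ioi i, (x j - x i)

theorem stmt_2 (n : ℕ) (hn : 0 < n) (u v : Fin n → ℝ)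
    (B : Matrix (Fin n) (Fin n) ℝ)
    (hB : ∀ i j, B i j = (1 + u i * v j) ^ (n - 1)) :
    B.det = vmd u * vmd v * ∏ j ∈ Finset.range n, ((n - 1).choose j : ℝ) := by
  have hB' : B = vandermonde u * diagonal (fun k : Fin n => ((n - 1).choose k : ℝ)) *
      (vandermonde v)ᵀ := by
    ext i j
    rw [hB]
    rw [Matrix.mul_apply]
    have : ∀ k : Fin n, (vandermonde u * diagonal (fun k : Fin n => ((n - 1).choose k : ℝ))) i k
        * (vandermonde v)ᵀ k j = (u i * v j) ^ (k : ℕ) * ((n - 1).choose k : ℝ) := by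
      intro k
      rw [Matrix.mul_apply, Finset.sum_eq_single k]
      · simp [vandermonde, diagonal, transpose_apply, mul_pow]; ring
      · intro b _ hb; simp [diagonal, hb]
      · simp
    rw [Finset.sum_congr rfl (fun k _ => this k)]
    rw [add_comm (1 : ℝ), add_pow]
    rw [Fin.sum_univ_eq_sum_range (fun k => (u i * v j) ^ k * ((n - 1).choose k : ℝ))]
    rw [show n = n - 1 + 1 by omega]
    simp
  rw [hB', det_mul, det_mul, det_transpose, det_vandermonde, det_vandermonde, det_diagonal,
    Fin.prod_univ_eq_prod_range (fun k => ((n - 1).choose k : ℝ)) n]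
  unfold vmd
  ring
end

section
/- Let n be a positive integer and let u, v ∈ ℝⁿ. If C is the n×n matrix with entries C(i,j) = (1 + u_i v_j)^n, then det(C) = Δ(u) · Δ(v) · (∏_{j=0}^{n} C(n, j)) · Σ_{k=0}^{n} e_k(u) e_k(v) / C(n, k), where C(n, j) denotes the binomial coefficient (n choose j). -/
open Matrix

/-- The `k`-th elementary symmetric polynomial evaluated at a vector. -/
noncomputable def esym {n : ℕ} (k : ℕ) (x : Fin n → ℝ) : ℝ :=
  ∑ S ∈ Finset.univ.powersetCard k, ∏ i ∈ S, x i

open Polynomial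

lemma vandermonde_snoc_det (n : ℕ) (x : Fin n → ℝ) :
    det (vandermonde (Fin.cons X (fun i => C (x i)) : Fin (n+1) → ℝ[X])) =
      C (vmd x) * ∏ j : Fin n, (C (x j) - X) := by
  rw [det_vandermonde, Fin.prod_univ_succ, mul_comm]
  congr 1
  · rw [vmd, map_prod]
    refine Finset.prod_congr rfl fun i _ => ?_
    rw [map_prod, Fin.prod_Ioi_succ]
    exact Finset.prod_congr rfl fun j hj => by simp [Fin.cons_succ, map_sub]
  · rw [Fin.prod_Ioi_zero]
    simp [Fin.cons_succ, Fin.cons_zero]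

lemma det_vandermonde_minor (n : ℕ) (x : Fin n → ℝ) (m : Fin (n+1)) :
    det (Matrix.of fun a b : Fin n => x a ^ ((m.succAbove b : Fin (n+1)) : ℕ))
      = esym (n - (m : ℕ)) x * vmd x := by
  set y : Fin (n+1) → ℝ[X] := Fin.cons X (fun i => C (x i)) with hy
  set D : Fin (n+1) → ℝ := fun j =>
    det (Matrix.of fun a b : Fin n => x a ^ ((j.succAbove b : Fin (n+1)) : ℕ)) with hD
  have hsub : ∀ j : Fin (n+1), (vandermonde y).submatrix Fin.succ j.succAbove =
      (Matrix.of fun a b : Fin n => x a ^ ((j.succAbove b : Fin (n+1)) : ℕ)).map C := by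
    intro j; ext a b
    simp [vandermonde, y, Fin.cons_succ, map_pow]
  have h2 := Matrix.det_succ_row_zero (vandermonde y)
  rw [vandermonde_snoc_det n x] at h2
  have h3 : C (vmd x) * ∏ j : Fin n, (C (x j) - X)
      = ∑ j : Fin (n+1), C ((-1)^(j:ℕ) * D j) * X ^ (j:ℕ) := by
    rw [h2]
    refine Finset.sum_congr rfl fun j _ => ?_
    rw [hsub j, ← RingHom.mapMatrix_apply, ← RingHom.map_det]
    have : vandermonde y 0 j = X ^ (j : ℕ) := by simp [vandermonde, y, Fin.cons_zero]
    rw [this, _root_.map_mul, map_pow, map_neg, _root_.map_one]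
    ring
  have hcoeff := congrArg (fun p : ℝ[X] => p.coeff (m : ℕ)) h3
  -- RHS coeff
  rw [Polynomial.finset_sum_coeff] at hcoeff
  simp only [Polynomial.coeff_C_mul_X_pow] at hcoeff
  have hrhs : (∑ j : Fin (n+1), if (m:ℕ) = (j:ℕ) then (-1)^(j:ℕ) * D j else 0)
      = (-1)^(m:ℕ) * D m := by
    rw [Finset.sum_eq_single m]
    · simp
    · intro j _ hj
      rw [if_neg (fun h => hj (Fin.ext h.symm))]
    · simp
  rw [hrhs] at hcoeff
  -- LHS coeff
  have hC1 : ((-1 : ℝ[X]))^n = C ((-1:ℝ)^n) := by simp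
  have hneg : ∏ j : Fin n, (C (x j) - X) = C ((-1:ℝ)^n) * ∏ j : Fin n, (X - C (x j)) := by
    calc ∏ j : Fin n, (C (x j) - X) = ∏ j : Fin n, ((-1 : ℝ[X]) * (X - C (x j))) :=
          Finset.prod_congr rfl fun j _ => by ring
      _ = (-1 : ℝ[X])^n * ∏ j : Fin n, (X - C (x j)) := by
          rw [Finset.prod_mul_distrib, Finset.prod_const, Finset.card_univ, Fintype.card_fin]
      _ = _ := by rw [hC1]
  rw [hneg, ← mul_assoc, ← _root_.map_mul, Polynomial.coeff_C_mul] at hcoeff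
  have hprod : ∏ j : Fin n, (X - C (x j))
      = ((Finset.univ.val.map x).map fun t => X - C t).prod := by
    rw [Multiset.map_map, Finset.prod_eq_multiset_prod]
    rfl
  have hcard : Multiset.card (Finset.univ.val.map x) = n := by simp
  have hm : (m : ℕ) ≤ Multiset.card (Finset.univ.val.map x) := by rw [hcard]; exact Fin.is_le m
  rw [hprod, Multiset.prod_X_sub_C_coeff _ hm, hcard] at hcoeff
  rw [Finset.esymm_map_val] at hcoeff
  have hesym : ((Finset.univ.powersetCard (n - (m:ℕ))).sum fun t => t.prod x)
      = esym (n - (m:ℕ)) x := rfl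
  rw [hesym] at hcoeff
  -- final algebra
  have hmn : (m : ℕ) ≤ n := Fin.is_le m
  have hpow : ((-1:ℝ))^(m:ℕ) * ((-1:ℝ)^n * (-1:ℝ)^(n - (m:ℕ))) = 1 := by
    rw [← pow_add, ← pow_add]
    have h : (m:ℕ) + (n + (n - (m:ℕ))) = 2 * n := by omega
    rw [h, pow_mul]; norm_num
  have hmm : ((-1:ℝ))^(m:ℕ) * ((-1:ℝ))^(m:ℕ) = 1 := by
    rw [← pow_add]; simp [pow_add, ← two_mul, pow_mul]
  show D m = esym (n - (m:ℕ)) x * vmd x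
  linear_combination (-((-1:ℝ)^(m:ℕ))) * hcoeff - (D m) * hmm + (esym (n - (m:ℕ)) x * vmd x) * hpow

theorem stmt_3 (n : ℕ) (hn : 0 < n) (u v : Fin n → ℝ)
    (C : Matrix (Fin n) (Fin n) ℝ)
    (hC : ∀ i j, C i j = (1 + u i * v j) ^ n) :
    C.det = vmd u * vmd v * (∏ j ∈ Finset.range (n + 1), (n.choose j : ℝ)) *
      ∑ k ∈ Finset.range (n + 1), esym k u * esym k v / (n.choose k : ℝ) := by
  classical
  set w : Fin (n+1) → (Fin n → ℝ) := fun k i => ((n.choose (k:ℕ)) : ℝ) * u i ^ (k:ℕ) with hw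
  -- rows of Cᵀ decompose
  have hrow : Cᵀ = Matrix.of fun j => ∑ k : Fin (n+1), (v j ^ (k:ℕ)) • w k := by
    ext j i
    simp only [Matrix.transpose_apply, Matrix.of_apply, hC]
    have h1 : ((1:ℝ) + u i * v j)^n
        = ∑ k ∈ Finset.range (n+1), (u i * v j)^k * (n.choose k : ℝ) := by
      rw [add_comm, add_pow]; simp
    rw [h1, ← Fin.sum_univ_eq_sum_range (fun k => (u i * v j)^k * (n.choose k : ℝ))]
    rw [Finset.sum_apply]
    refine Finset.sum_congr rfl fun k _ => ?_
    simp only [Pi.smul_apply, smul_eq_mul, hw, mul_pow]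
    ring
  set F : (Fin n → Fin (n+1)) → ℝ := fun r =>
    (∏ j : Fin n, v j ^ ((r j : Fin (n+1)) : ℕ)) •
      Matrix.detRowAlternating (fun j => w (r j)) with hF
  have hdet1 : C.det = ∑ r : Fin n → Fin (n+1), F r := by
    rw [← Matrix.det_transpose, hrow]
    have hd : (Matrix.of fun j => ∑ k : Fin (n+1), (v j ^ (k:ℕ)) • w k).det
        = Matrix.detRowAlternating (fun j => ∑ k : Fin (n+1), (v j ^ (k:ℕ)) • w k) := rfl
    rw [hd]
    have hms := Matrix.detRowAlternating.toMultilinearMap.map_sum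
      (fun (j : Fin n) (k : Fin (n+1)) => (v j ^ (k:ℕ)) • w k)
    rw [AlternatingMap.coe_multilinearMap] at hms
    rw [hms]
    refine Finset.sum_congr rfl fun r _ => ?_
    exact Matrix.detRowAlternating.toMultilinearMap.map_smul_univ
      (fun j => v j ^ ((r j : Fin (n+1)) : ℕ)) (fun j => w (r j))
  -- restrict to injective r
  have hzero : ∀ r : Fin n → Fin (n+1), ¬ Function.Injective r →
      Matrix.detRowAlternating (fun j => w (r j)) = 0 := by
    intro r hr
    simp only [Function.Injective] at hr; push_neg at hr
    obtain ⟨a, b, hab, hne⟩ := hr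
    exact Matrix.detRowAlternating.map_eq_zero_of_eq _ (by rw [hab]) hne
  have hdet2 : C.det = ∑ r ∈ Finset.univ.filter
      (fun r : Fin n → Fin (n+1) => Function.Injective r), F r := by
    rw [hdet1]
    symm
    apply Finset.sum_subset (Finset.filter_subset _ _)
    intro r _ hrf
    have : ¬ Function.Injective r := by simpa using hrf
    rw [hF]; simp only [hzero r this, smul_zero]
  -- reindex by (missing value, permutation)
  have hdet3 : C.det = ∑ p : Fin (n+1) × Equiv.Perm (Fin n),
      F (p.1.succAbove ∘ (p.2 : Fin n → Fin n)) := by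
    rw [hdet2]
    refine (Finset.sum_bij
      (fun (p : Fin (n+1) × Equiv.Perm (Fin n)) _ => p.1.succAbove ∘ (p.2 : Fin n → Fin n))
      ?_ ?_ ?_ ?_).symm
    · intro p _
      refine Finset.mem_filter.mpr ⟨Finset.mem_univ _, ?_⟩
      exact Fin.succAbove_right_injective.comp p.2.injective
    · intro p _ q _ h
      have hr1 : Set.range (p.1.succAbove ∘ (p.2 : Fin n → Fin n)) = {p.1}ᶜ := by
        rw [Set.range_comp, Equiv.range_eq_univ, Set.image_univ, Fin.range_succAbove]
      have hr2 : Set.range (q.1.succAbove ∘ (q.2 : Fin n → Fin n)) = {q.1}ᶜ := by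
        rw [Set.range_comp, Equiv.range_eq_univ, Set.image_univ, Fin.range_succAbove]
      have h' : p.1.succAbove ∘ (p.2 : Fin n → Fin n)
          = q.1.succAbove ∘ (q.2 : Fin n → Fin n) := h
      rw [h'] at hr1
      have hc : ({p.1}ᶜ : Set (Fin (n+1))) = ({q.1}ᶜ : Set (Fin (n+1))) := hr1.symm.trans hr2
      have h1 : p.1 = q.1 := by
        have := compl_injective hc
        simpa [Set.singleton_eq_singleton_iff] using this
      have h2 : p.2 = q.2 := by
        refine Equiv.ext fun j => ?_
        apply Fin.succAbove_right_injective (p := p.1)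
        have := congrFun h' j
        simp only [Function.comp_apply] at this
        rw [this, h1]
      exact Prod.ext h1 h2
    · intro r hr
      have hinj : Function.Injective r := (Finset.mem_filter.mp hr).2
      have hnsurj : ¬ Function.Surjective r := by
        intro hs
        have := Fintype.card_le_of_surjective r hs
        simp at this
      rw [Function.Surjective] at hnsurj; push_neg at hnsurj
      obtain ⟨m, hm⟩ := hnsurj
      have hg : ∀ j, ∃ z, m.succAbove z = r j := fun j => Fin.exists_succAbove_eq (hm j)
      choose g hgs using hg
      have hginj : Function.Injective g := by
        intro a b hab
        apply hinj
        rw [← hgs a, ← hgs b, hab]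
      refine ⟨(m, Equiv.ofBijective g
        ((Fintype.bijective_iff_injective_and_card g).mpr ⟨hginj, rfl⟩)),
        Finset.mem_univ _, funext fun j => ?_⟩
      exact hgs j
    · intro p _; rfl
  rw [Fintype.sum_prod_type] at hdet3
  -- compute inner sums
  have hterm : ∀ m : Fin (n+1), ∀ σ : Equiv.Perm (Fin n),
      F (m.succAbove ∘ (σ : Fin n → Fin n)) =
        ((Equiv.Perm.sign σ : ℝ) * ∏ j : Fin n, v j ^ ((m.succAbove (σ j) : Fin (n+1)) : ℕ)) *
          ((∏ j : Fin n, ((n.choose ((m.succAbove j : Fin (n+1)) : ℕ)) : ℝ)) *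
            (esym (n - (m:ℕ)) u * vmd u)) := by
    intro m σ
    have hA : Matrix.detRowAlternating (fun j => w (m.succAbove (σ j)))
        = ((Matrix.of fun j i => w (m.succAbove j) i).submatrix (σ : Fin n → Fin n) id).det := by
      rfl
    rw [hF]
    simp only [Function.comp_apply]
    rw [hA, Matrix.det_permute]
    have hM : (Matrix.of fun j i => w (m.succAbove j) i).det
        = (∏ j : Fin n, ((n.choose ((m.succAbove j : Fin (n+1)) : ℕ)) : ℝ)) *
          (esym (n - (m:ℕ)) u * vmd u) := by
      have h1 : (Matrix.of fun j i => w (m.succAbove j) i)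
          = Matrix.of (fun j i => ((n.choose ((m.succAbove j : Fin (n+1)) : ℕ)) : ℝ) *
              (Matrix.of fun (a b : Fin n) => u b ^ ((m.succAbove a : Fin (n+1)) : ℕ)) j i) := by
        ext j i; simp [hw]
      rw [h1, Matrix.det_mul_column]
      congr 1
      have h2 : (Matrix.of fun (a b : Fin n) => u b ^ ((m.succAbove a : Fin (n+1)) : ℕ))
          = (Matrix.of fun (a b : Fin n) => u a ^ ((m.succAbove b : Fin (n+1)) : ℕ))ᵀ := by
        ext a b; rfl
      rw [h2, Matrix.det_transpose, det_vandermonde_minor]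
    rw [hM]
    simp only [smul_eq_mul]
    ring
  have hinner : ∀ m : Fin (n+1),
      (∑ σ : Equiv.Perm (Fin n), F (m.succAbove ∘ (σ : Fin n → Fin n))) =
        (esym (n - (m:ℕ)) v * vmd v) *
          ((∏ j : Fin n, ((n.choose ((m.succAbove j : Fin (n+1)) : ℕ)) : ℝ)) *
            (esym (n - (m:ℕ)) u * vmd u)) := by
    intro m
    have hdv : (∑ σ : Equiv.Perm (Fin n), (Equiv.Perm.sign σ : ℝ) *
        ∏ j : Fin n, v j ^ ((m.succAbove (σ j) : Fin (n+1)) : ℕ))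
          = esym (n - (m:ℕ)) v * vmd v := by
      have := Matrix.det_apply' (Matrix.of fun (a b : Fin n) => v b ^ ((m.succAbove a : Fin (n+1)) : ℕ))
      simp only [Matrix.of_apply] at this
      rw [← this]
      have h2 : (Matrix.of fun (a b : Fin n) => v b ^ ((m.succAbove a : Fin (n+1)) : ℕ))
          = (Matrix.of fun (a b : Fin n) => v a ^ ((m.succAbove b : Fin (n+1)) : ℕ))ᵀ := by
        ext a b; rfl
      rw [h2, Matrix.det_transpose, det_vandermonde_minor]
    calc (∑ σ : Equiv.Perm (Fin n), F (m.succAbove ∘ (σ : Fin n → Fin n)))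
        = (∑ σ : Equiv.Perm (Fin n), (Equiv.Perm.sign σ : ℝ) *
            ∏ j : Fin n, v j ^ ((m.succAbove (σ j) : Fin (n+1)) : ℕ)) *
          ((∏ j : Fin n, ((n.choose ((m.succAbove j : Fin (n+1)) : ℕ)) : ℝ)) *
            (esym (n - (m:ℕ)) u * vmd u)) := by
          rw [Finset.sum_mul]
          exact Finset.sum_congr rfl fun σ _ => hterm m σ
      _ = _ := by rw [hdv]
  simp only [hinner] at hdet3
  -- product of binomials over succAbove
  have hchoose_ne : ∀ m : ℕ, m ≤ n → ((n.choose m : ℝ)) ≠ 0 := fun m hm =>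
    Nat.cast_ne_zero.mpr (Nat.choose_pos hm).ne'
  have hP : ∀ m : Fin (n+1),
      (∏ j : Fin n, ((n.choose ((m.succAbove j : Fin (n+1)) : ℕ)) : ℝ))
        = (∏ j ∈ Finset.range (n+1), (n.choose j : ℝ)) / (n.choose (m:ℕ) : ℝ) := by
    intro m
    have h1 := Fin.prod_univ_succAbove (fun k : Fin (n+1) => ((n.choose (k:ℕ)) : ℝ)) m
    rw [Fin.prod_univ_eq_prod_range (fun k => ((n.choose k) : ℝ))] at h1
    rw [eq_div_iff (hchoose_ne _ (Fin.is_le m)), mul_comm]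
    exact h1.symm
  rw [hdet3]
  simp only [hP]
  -- reindex m ↦ n - m
  rw [Fin.sum_univ_eq_sum_range (fun m => (esym (n - m) v * vmd v) *
    (((∏ j ∈ Finset.range (n+1), (n.choose j : ℝ)) / (n.choose m : ℝ)) *
      (esym (n - m) u * vmd u)))]
  rw [← Finset.sum_range_reflect]
  rw [Finset.mul_sum]
  refine Finset.sum_congr rfl fun k hk => ?_
  have hk' : k ≤ n := Nat.lt_succ_iff.mp (Finset.mem_range.mp hk)
  have h1 : n + 1 - 1 - k = n - k := by omega
  have h2 : n - (n - k) = k := by omega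
  rw [h1, h2, Nat.choose_symm hk']
  ring
end

section
/- Let n be a positive integer and let u, v ∈ ℝⁿ. If A is the n×n matrix with entries A(i,j) = 1 + u_i v_j, then perm(A) = Σ_{k=0}^{n} k! · (n−k)! · e_k(u) · e_k(v). -/
open Matrix

open Finset Equiv

private lemma exists_perm_image {n : ℕ} {S T : Finset (Fin n)} (h : S.card = T.card) :
    ∃ τ : Equiv.Perm (Fin n), S.image τ = T := by
  have e : {x // x ∈ S} ≃ {x // x ∈ T} := by
    apply Fintype.equivOfCardEq; simpa using h
  refine ⟨e.extendSubtype, ?_⟩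
  apply Finset.eq_of_subset_of_card_le
  · intro j hj
    simp only [Finset.mem_image] at hj
    obtain ⟨i, hi, rfl⟩ := hj
    exact e.extendSubtype_mem i hi
  · rw [Finset.card_image_of_injective _ e.extendSubtype.injective, h]

private lemma sum_perm_prod_congr {n : ℕ} (v : Fin n → ℝ) {S T : Finset (Fin n)}
    (h : S.card = T.card) :
    (∑ σ : Equiv.Perm (Fin n), ∏ i ∈ S, v (σ i))
      = ∑ σ : Equiv.Perm (Fin n), ∏ i ∈ T, v (σ i) := by
  obtain ⟨τ, hτ⟩ := exists_perm_image h
  rw [← Equiv.sum_comp (Equiv.mulRight τ) fun σ : Equiv.Perm (Fin n) => ∏ i ∈ S, v (σ i)]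
  refine Finset.sum_congr rfl fun σ _ => ?_
  rw [← hτ, Finset.prod_image (fun a _ b _ hab => τ.injective hab)]
  rfl

private lemma sum_prod_powersetCard {n k : ℕ} (v : Fin n → ℝ) (σ : Equiv.Perm (Fin n)) :
    (∑ T ∈ Finset.univ.powersetCard k, ∏ i ∈ T, v (σ i)) = esym k v := by
  unfold esym
  refine Finset.sum_bij (fun T _ => T.image σ) ?_ ?_ ?_ ?_
  · intro T hT
    simp only [Finset.mem_powersetCard] at hT ⊢
    exact ⟨Finset.subset_univ _, by rw [Finset.card_image_of_injective _ σ.injective, hT.2]⟩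
  · intro T₁ h₁ T₂ h₂ h
    exact Finset.image_injective σ.injective h
  · intro T hT
    refine ⟨T.image σ.symm, ?_, ?_⟩
    · simp only [Finset.mem_powersetCard] at hT ⊢
      exact ⟨Finset.subset_univ _,
        by rw [Finset.card_image_of_injective _ σ.symm.injective, hT.2]⟩
    · show Finset.image _ _ = T
      rw [Finset.image_image]
      simp
  · intro T hT
    rw [Finset.prod_image (fun a _ b _ hab => σ.injective hab)]

private lemma key {n k : ℕ} (hk : k ≤ n) (v : Fin n → ℝ) {S : Finset (Fin n)}
    (hS : S ∈ Finset.univ.powersetCard k) :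
    (∑ σ : Equiv.Perm (Fin n), ∏ i ∈ S, v (σ i))
      = (k.factorial : ℝ) * ((n - k).factorial : ℝ) * esym k v := by
  have hScard : S.card = k := (Finset.mem_powersetCard.mp hS).2
  have hconst : ∀ T ∈ Finset.univ.powersetCard k,
      (∑ σ : Equiv.Perm (Fin n), ∏ i ∈ T, v (σ i))
        = ∑ σ : Equiv.Perm (Fin n), ∏ i ∈ S, v (σ i) := by
    intro T hT
    exact sum_perm_prod_congr v ((Finset.mem_powersetCard.mp hT).2.trans hScard.symm)
  have htot : ((n.choose k : ℕ) : ℝ) * (∑ σ : Equiv.Perm (Fin n), ∏ i ∈ S, v (σ i))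
      = (n.factorial : ℝ) * esym k v := by
    have h1 : (∑ T ∈ Finset.univ.powersetCard k,
        ∑ σ : Equiv.Perm (Fin n), ∏ i ∈ T, v (σ i))
        = ((n.choose k : ℕ) : ℝ) * (∑ σ : Equiv.Perm (Fin n), ∏ i ∈ S, v (σ i)) := by
      rw [Finset.sum_congr rfl hconst, Finset.sum_const, nsmul_eq_mul]
      congr 2
      rw [Finset.card_powersetCard, Finset.card_univ, Fintype.card_fin]
    have h2 : (∑ T ∈ Finset.univ.powersetCard k,
        ∑ σ : Equiv.Perm (Fin n), ∏ i ∈ T, v (σ i))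
        = (n.factorial : ℝ) * esym k v := by
      rw [Finset.sum_comm]
      rw [Finset.sum_congr rfl fun σ _ => sum_prod_powersetCard v σ]
      rw [Finset.sum_const, nsmul_eq_mul]
      congr 2
      rw [Finset.card_univ, Fintype.card_perm, Fintype.card_fin]
    rw [← h1, h2]
  have hne : ((n.choose k : ℕ) : ℝ) ≠ 0 := by
    exact_mod_cast (Nat.choose_pos hk).ne'
  apply mul_left_cancel₀ hne
  rw [htot]
  have : (n.factorial : ℝ)
      = ((n.choose k : ℕ) : ℝ) * ((k.factorial : ℝ) * ((n - k).factorial : ℝ)) := by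
    rw [← Nat.choose_mul_factorial_mul_factorial hk]
    push_cast; ring
  rw [this]; ring

theorem stmt_4 (n : ℕ) (hn : 0 < n) (u v : Fin n → ℝ)
    (A : Matrix (Fin n) (Fin n) ℝ)
    (hA : ∀ i j, A i j = 1 + u i * v j) :
    A.permanent = ∑ k ∈ Finset.range (n + 1),
      (k.factorial : ℝ) * ((n - k).factorial : ℝ) * esym k u * esym k v := by
  unfold Matrix.permanent
  have hprod : ∀ σ : Equiv.Perm (Fin n),
      (∏ i, A (σ i) i)
        = ∑ t ∈ (Finset.univ : Finset (Fin n)).powerset,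
            (∏ i ∈ t, v i) * ∏ i ∈ t, u (σ i) := by
    intro σ
    have : (∏ i, A (σ i) i) = ∏ i, (u (σ i) * v i + 1) := by
      refine Finset.prod_congr rfl fun i _ => ?_
      rw [hA]; ring
    rw [this, Finset.prod_add]
    refine Finset.sum_congr rfl fun t _ => ?_
    rw [Finset.prod_const_one, mul_one, Finset.prod_mul_distrib, mul_comm]
  rw [Finset.sum_congr rfl fun σ _ => hprod σ, Finset.sum_comm]
  have huniv : (Finset.univ : Finset (Fin n)).card = n := by
    rw [Finset.card_univ, Fintype.card_fin]
  rw [Finset.sum_powerset, huniv]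
  refine Finset.sum_congr rfl fun k hk => ?_
  have hkn : k ≤ n := Nat.lt_succ_iff.mp (Finset.mem_range.mp hk)
  have : ∀ t ∈ Finset.univ.powersetCard k,
      (∑ σ : Equiv.Perm (Fin n), (∏ i ∈ t, v i) * ∏ i ∈ t, u (σ i))
        = (∏ i ∈ t, v i) * ((k.factorial : ℝ) * ((n - k).factorial : ℝ) * esym k u) := by
    intro t ht
    rw [← Finset.mul_sum, key hkn u ht]
  rw [Finset.sum_congr rfl this, ← Finset.sum_mul]
  show (esym k v) * _ = _
  ring
end

section
/- Let n be a positive integer, let x ∈ ℝⁿ, and let 0 ≤ k ≤ n. Let Q_x^k be the n×n matrix (rows and columns indexed by 1, …, n) with entries Q_x^k(i,j) = x_j^i if i > k and Q_x^k(i,j) = x_j^{i-1} if i ≤ k. Then det(Q_x^k) = e_{n-k}(x) · Δ(x). -/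
open Matrix

open Polynomial
theorem stmt_5 (n : ℕ) (hn : 0 < n) (x : Fin n → ℝ) (k : ℕ) (hk : k ≤ n)
    (Q : Matrix (Fin n) (Fin n) ℝ)
    (hQ : ∀ i j : Fin n,
      Q i j = if (i : ℕ) + 1 > k then x j ^ ((i : ℕ) + 1) else x j ^ (i : ℕ)) :
    Q.det = esym (n - k) x * vmd x := by
  set K : Fin (n + 1) := ⟨k, Nat.lt_succ_of_le hk⟩ with hK
  set v : Fin (n + 1) → ℝ[X] := Fin.cons X (fun i => C (x i)) with hv
  -- the real minor matrices
  set D : Fin (n + 1) → Matrix (Fin n) (Fin n) ℝ :=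
    fun j => Matrix.of fun i l => x i ^ ((j.succAbove l : ℕ)) with hD
  -- two formulas for the determinant of the big Vandermonde
  have h1 : (vandermonde v).det =
      (-1 : ℝ[X]) ^ n * (C (vmd x) * ∏ i : Fin n, (X - C (x i))) := by
    rw [det_vandermonde, Fin.prod_univ_succ, Fin.prod_Ioi_zero]
    have e1 : (∏ j : Fin n, (v j.succ - v 0)) = (-1 : ℝ[X]) ^ n * ∏ i : Fin n, (X - C (x i)) := by
      simp only [hv, Fin.cons_succ, Fin.cons_zero]
      have h : ∀ j : Fin n, C (x j) - X = (-1 : ℝ[X]) * (X - C (x j)) := fun j => by ring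
      rw [Finset.prod_congr rfl fun j _ => h j, Finset.prod_mul_distrib, Finset.prod_const,
        Finset.card_univ, Fintype.card_fin]
    have e2 : (∏ i : Fin n, ∏ j ∈ Finset.Ioi i.succ, (v j - v i.succ)) = C (vmd x) := by
      rw [vmd, map_prod]
      refine Finset.prod_congr rfl fun i _ => ?_
      rw [Fin.prod_Ioi_succ, map_prod]
      refine Finset.prod_congr rfl fun j _ => ?_
      simp [hv]
    rw [e1, e2]; ring
  have h2 : (vandermonde v).det =
      ∑ j : Fin (n + 1), C ((-1 : ℝ) ^ (j : ℕ) * (D j).det) * X ^ (j : ℕ) := by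
    rw [det_succ_row_zero]
    refine Finset.sum_congr rfl fun j _ => ?_
    have hsub : ((vandermonde v).submatrix Fin.succ j.succAbove) = (D j).map C := by
      ext i l
      simp only [Matrix.submatrix_apply, vandermonde_apply, Matrix.map_apply, hD,
        Matrix.of_apply, hv, Fin.cons_succ, map_pow]
    rw [hsub, ← RingHom.mapMatrix_apply, ← RingHom.map_det, vandermonde_apply]
    simp only [hv, Fin.cons_zero, _root_.map_mul, map_pow, _root_.map_neg, _root_.map_one]
    ring
  -- take coefficient k of both sides
  have hcard : Multiset.card (Finset.univ.val.map x) = n := by simp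
  have hcoeff1 : ((vandermonde v).det).coeff k =
      (-1 : ℝ) ^ n * (vmd x * ((-1 : ℝ) ^ (n - k) * esym (n - k) x)) := by
    rw [h1]
    have hprod : (∏ i : Fin n, (X - C (x i))) =
        ((Finset.univ.val.map x).map fun t => X - C t).prod := by
      rw [Multiset.map_map]; rfl
    have := Multiset.prod_X_sub_C_coeff (Finset.univ.val.map x) (k := k) (by rw [hcard]; exact hk)
    rw [← hprod, hcard] at this
    have hesym : (Finset.univ.val.map x).esymm (n - k) = esym (n - k) x := by
      rw [Finset.esymm_map_val]; rfl
    have hC : ((-1 : ℝ[X]) ^ n) = C ((-1 : ℝ) ^ n) := by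
      rw [map_pow]; norm_num
    rw [hC, coeff_C_mul, coeff_C_mul, this, hesym]
  have hcoeff2 : ((vandermonde v).det).coeff k = (-1 : ℝ) ^ k * (D K).det := by
    rw [h2, Polynomial.finset_sum_coeff]
    rw [Finset.sum_eq_single K]
    · rw [coeff_C_mul, Polynomial.coeff_X_pow, if_pos rfl, mul_one]
    · intro j _ hj
      rw [coeff_C_mul, Polynomial.coeff_X_pow, if_neg, mul_zero]
      intro h
      exact hj (Fin.ext (by simpa using h.symm))
    · intro h; exact absurd (Finset.mem_univ K) h
  -- identify Q with (D K)ᵀ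
  have hQD : Q = (D K)ᵀ := by
    ext i j
    rw [hQ, Matrix.transpose_apply]
    have : ((K.succAbove i : ℕ)) = if (i : ℕ) + 1 > k then (i : ℕ) + 1 else (i : ℕ) := by
      rcases lt_or_ge ((i : ℕ) + 1) (k + 1) with h | h
      · rw [Fin.succAbove, if_pos, if_neg (by omega)]
        · simp
        · simpa [Fin.lt_def, hK] using Nat.lt_of_succ_lt_succ h
      · rw [Fin.succAbove, if_neg, if_pos (by omega)]
        · simp
        · simp only [Fin.lt_def, hK, Fin.coe_castSucc, not_lt]; omega
      
    simp [hD, this]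
  have hdet : Q.det = (D K).det := by rw [hQD, Matrix.det_transpose]
  have key : (-1 : ℝ) ^ k * (D K).det =
      (-1 : ℝ) ^ n * (vmd x * ((-1 : ℝ) ^ (n - k) * esym (n - k) x)) := by
    rw [← hcoeff2, ← hcoeff1]
  have hsign : (-1 : ℝ) ^ n * (-1 : ℝ) ^ (n - k) * (-1 : ℝ) ^ k = 1 := by
    rw [← pow_add, ← pow_add]
    have : n + (n - k) + k = 2 * n := by omega
    rw [this, pow_mul]; norm_num
  have : (D K).det = ((-1 : ℝ) ^ n * (-1 : ℝ) ^ (n - k) * (-1 : ℝ) ^ k) * (esym (n - k) x * vmd x) := by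
    have hk2 : (-1 : ℝ) ^ k * ((-1 : ℝ) ^ k * (D K).det) = (D K).det := by
      rw [← mul_assoc, ← pow_add, Even.neg_one_pow ⟨k, by ring⟩, one_mul]
    rw [← hk2, key]; ring
  rw [hdet, this, hsign, one_mul]
end

section
/- Let n be a positive integer and let M be an n×n real matrix of rank 2 all of whose entries are nonzero. Let M_{-1} and M_{-2} denote the n×n matrices with entries M_{-1}(i,j) = M(i,j)^{-1} and M_{-2}(i,j) = M(i,j)^{-2}. Then det(M_{-2}) = det(M_{-1}) · perm(M_{-1}). -/
open Matrix Equiv Finset Polynomial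

private theorem perm_succ_column_zero {R : Type*} [CommRing R] {n : ℕ}
    (A : Matrix (Fin n.succ) (Fin n.succ) R) :
    permanent A = ∑ i : Fin n.succ, A i 0 * permanent (A.submatrix i.succAbove Fin.succ) := by
  rw [Matrix.permanent, Finset.univ_perm_fin_succ, ← Finset.univ_product_univ]
  simp only [Finset.sum_map, Equiv.toEmbedding_apply, Finset.sum_product]
  refine Finset.sum_congr rfl fun p _ => ?_
  have key : ∀ e : Perm (Fin n), ∏ i, A (Equiv.Perm.decomposeFin.symm (p, e) i) i
      = A p 0 * ∏ x : Fin n, A (swap 0 p (e x).succ) x.succ := by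
    intro e
    rw [Fin.prod_univ_succ]
    simp
  simp only [key]
  rw [← Finset.mul_sum]
  congr 1
  induction p using Fin.cases with
  | zero =>
      rw [Matrix.permanent]
      refine Finset.sum_congr rfl fun e _ => Finset.prod_congr rfl fun x _ => ?_
      simp [Matrix.submatrix_apply]
  | succ i =>
      rw [← Matrix.permanent_permute_cols (i.cycleRange) (A.submatrix i.succ.succAbove Fin.succ),
        Matrix.permanent]
      refine Finset.sum_congr rfl fun e _ => Finset.prod_congr rfl fun x _ => ?_
      simp [Matrix.submatrix_apply, Fin.succAbove_cycleRange]

private theorem perm_succ_row_zero {R : Type*} [CommRing R] {n : ℕ}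
    (A : Matrix (Fin n.succ) (Fin n.succ) R) :
    permanent A = ∑ j : Fin n.succ, A 0 j * permanent (A.submatrix Fin.succ j.succAbove) := by
  rw [← Matrix.permanent_transpose A, perm_succ_column_zero]
  refine Finset.sum_congr rfl fun j _ => ?_
  rw [← Matrix.permanent_transpose (A.submatrix Fin.succ j.succAbove)]
  congr 1

private theorem det_scale {R : Type*} [CommRing R] {m : ℕ} (r c : Fin m → R)
    (B : Matrix (Fin m) (Fin m) R) :
    det (Matrix.of fun i j => r i * c j * B i j) = (∏ i, r i) * (∏ j, c j) * det B := by
  have : (Matrix.of fun i j => r i * c j * B i j)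
      = Matrix.diagonal r * B * Matrix.diagonal c := by
    ext i j
    simp [Matrix.mul_apply, Matrix.diagonal, Finset.sum_ite_eq, Finset.sum_ite_eq']
    ring
  rw [this, Matrix.det_mul, Matrix.det_mul, Matrix.det_diagonal, Matrix.det_diagonal]
  ring

private theorem perm_scale {R : Type*} [CommRing R] {m : ℕ} (r c : Fin m → R)
    (B : Matrix (Fin m) (Fin m) R) :
    permanent (Matrix.of fun i j => r i * c j * B i j)
      = (∏ i, r i) * (∏ j, c j) * permanent B := by
  rw [Matrix.permanent, Matrix.permanent, Finset.mul_sum]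
  refine Finset.sum_congr rfl fun σ _ => ?_
  simp only [Matrix.of_apply]
  rw [Finset.prod_mul_distrib, Finset.prod_mul_distrib, Equiv.prod_comp σ r]

private theorem borchardt_succ (n : ℕ)
    (IH : ∀ x y : Fin n → ℝ, (∀ i j, x i + y j ≠ 0) →
      (Matrix.of fun i j => ((x i + y j)⁻¹) ^ 2).det =
        (Matrix.of fun i j => (x i + y j)⁻¹).det *
          (Matrix.of fun i j => (x i + y j)⁻¹).permanent)
    (x y : Fin (n + 1) → ℝ) (h : ∀ i j, x i + y j ≠ 0) :
    (Matrix.of fun i j => ((x i + y j)⁻¹) ^ 2).det =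
      (Matrix.of fun i j => (x i + y j)⁻¹).det *
        (Matrix.of fun i j => (x i + y j)⁻¹).permanent := by
  by_cases hx : Function.Injective x
  case neg =>
    -- two equal rows
    rw [Function.not_injective_iff] at hx
    obtain ⟨i, i', hii, hne⟩ := hx
    have h1 : (Matrix.of fun i j => ((x i + y j)⁻¹) ^ 2).det = 0 :=
      Matrix.det_zero_of_row_eq hne (funext fun j => by simp [hii])
    have h2 : (Matrix.of fun i j => (x i + y j)⁻¹).det = 0 :=
      Matrix.det_zero_of_row_eq hne (funext fun j => by simp [hii])
    rw [h1, h2, zero_mul]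
  by_cases hy : Function.Injective y
  case neg =>
    rw [Function.not_injective_iff] at hy
    obtain ⟨j, j', hjj, hne⟩ := hy
    have h1 : (Matrix.of fun i j => ((x i + y j)⁻¹) ^ 2).det = 0 :=
      Matrix.det_zero_of_column_eq hne (fun k => by simp [hjj])
    have h2 : (Matrix.of fun i j => (x i + y j)⁻¹).det = 0 :=
      Matrix.det_zero_of_column_eq hne (fun k => by simp [hjj])
    rw [h1, h2, zero_mul]
  -- main case
  set xs : Fin n → ℝ := x ∘ Fin.succ with hxs
  -- the matrices with a variable first row
  set Mt : ℝ → Matrix (Fin (n + 1)) (Fin (n + 1)) ℝ :=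
    fun t => Matrix.of fun i j => (((Fin.cons t xs : Fin (n+1) → ℝ) i + y j)⁻¹) with hMt
  set Mq : ℝ → Matrix (Fin (n + 1)) (Fin (n + 1)) ℝ :=
    fun t => Matrix.of fun i j => (((Fin.cons t xs : Fin (n+1) → ℝ) i + y j)⁻¹) ^ 2 with hMq
  -- minors
  set d : Fin (n + 1) → ℝ :=
    fun j => (Matrix.of fun a b => ((xs a + y (j.succAbove b))⁻¹)).det with hd
  set dq : Fin (n + 1) → ℝ :=
    fun j => (Matrix.of fun a b => ((xs a + y (j.succAbove b))⁻¹) ^ 2).det with hdq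
  set p : Fin (n + 1) → ℝ :=
    fun j => (Matrix.of fun a b => ((xs a + y (j.succAbove b))⁻¹)).permanent with hp
  have hsubMt : ∀ (t : ℝ) (j : Fin (n + 1)),
      (Mt t).submatrix Fin.succ j.succAbove
        = Matrix.of fun a b => ((xs a + y (j.succAbove b))⁻¹) := by
    intro t j; ext a b; simp [hMt]
  have hsubMq : ∀ (t : ℝ) (j : Fin (n + 1)),
      (Mq t).submatrix Fin.succ j.succAbove
        = Matrix.of fun a b => ((xs a + y (j.succAbove b))⁻¹) ^ 2 := by
    intro t j; ext a b; simp [hMq]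
  -- Laplace expansions
  have hdetMt : ∀ t : ℝ, (Mt t).det = ∑ j : Fin (n+1), (-1) ^ (j : ℕ) * (t + y j)⁻¹ * d j := by
    intro t
    rw [Matrix.det_succ_row_zero]
    refine Finset.sum_congr rfl fun j _ => ?_
    rw [hsubMt]
    simp only [hMt, Matrix.of_apply, Fin.cons_zero, hd]
  have hdetMq : ∀ t : ℝ, (Mq t).det = ∑ j : Fin (n+1), (-1) ^ (j : ℕ) * ((t + y j)⁻¹) ^ 2 * dq j := by
    intro t
    rw [Matrix.det_succ_row_zero]
    refine Finset.sum_congr rfl fun j _ => ?_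
    rw [hsubMq]
    simp only [hMq, Matrix.of_apply, Fin.cons_zero, hdq]
  have hpermMt : ∀ t : ℝ, (Mt t).permanent = ∑ j, (t + y j)⁻¹ * p j := by
    intro t
    rw [perm_succ_row_zero]
    refine Finset.sum_congr rfl fun j _ => ?_
    rw [hsubMt]
    simp only [hMt, Matrix.of_apply, Fin.cons_zero, hp]
  -- polynomials
  set Pj : Fin (n + 1) → Polynomial ℝ :=
    fun j => ∏ m ∈ Finset.univ.erase j, (Polynomial.X + Polynomial.C (y m)) with hPj
  set P : Polynomial ℝ :=
    ∑ j : Fin (n+1), Polynomial.C ((-1) ^ (j : ℕ) * dq j) * (Pj j) ^ 2 with hP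
  set Q : Polynomial ℝ :=
    ∑ j : Fin (n+1), Polynomial.C ((-1) ^ (j : ℕ) * d j) * Pj j with hQ
  set Rp : Polynomial ℝ := ∑ j, Polynomial.C (p j) * Pj j with hRp
  set G : Polynomial ℝ := P - Q * Rp with hG
  have hevalPj : ∀ (t : ℝ) (j : Fin (n + 1)),
      (Pj j).eval t = ∏ m ∈ Finset.univ.erase j, (t + y m) := by
    intro t j; simp [hPj, Polynomial.eval_prod]
  -- key evaluation identity
  have hevalP : ∀ t : ℝ, (∀ j, t + y j ≠ 0) →
      P.eval t = (Mq t).det * ∏ j, (t + y j) ^ 2 := by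
    intro t ht
    rw [hdetMq, hP, Finset.sum_mul]
    simp only [Polynomial.eval_finset_sum, Polynomial.eval_mul, Polynomial.eval_C,
      Polynomial.eval_pow, hevalPj]
    refine Finset.sum_congr rfl fun j _ => ?_
    rw [← Finset.mul_prod_erase Finset.univ (fun m => (t + y m) ^ 2) (Finset.mem_univ j),
      Finset.prod_pow]
    have key : (t + y j)⁻¹ ^ 2 * (t + y j) ^ 2 = 1 := by
      rw [← mul_pow, inv_mul_cancel₀ (ht j), one_pow]
    linear_combination (-((-1 : ℝ) ^ (j : ℕ) * dq j) * (∏ m ∈ Finset.univ.erase j, (t + y m)) ^ 2) * key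
  have hevalQ : ∀ t : ℝ, (∀ j, t + y j ≠ 0) →
      Q.eval t = (Mt t).det * ∏ j, (t + y j) := by
    intro t ht
    rw [hdetMt, hQ, Finset.sum_mul]
    simp only [Polynomial.eval_finset_sum, Polynomial.eval_mul, Polynomial.eval_C, hevalPj]
    refine Finset.sum_congr rfl fun j _ => ?_
    rw [← Finset.mul_prod_erase Finset.univ (fun m => (t + y m)) (Finset.mem_univ j)]
    have key : (t + y j)⁻¹ * (t + y j) = 1 := inv_mul_cancel₀ (ht j)
    linear_combination (-((-1 : ℝ) ^ (j : ℕ) * d j) * ∏ m ∈ Finset.univ.erase j, (t + y m)) * key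
  have hevalRp : ∀ t : ℝ, (∀ j, t + y j ≠ 0) →
      Rp.eval t = (Mt t).permanent * ∏ j, (t + y j) := by
    intro t ht
    rw [hpermMt, hRp, Finset.sum_mul]
    simp only [Polynomial.eval_finset_sum, Polynomial.eval_mul, Polynomial.eval_C, hevalPj]
    refine Finset.sum_congr rfl fun j _ => ?_
    rw [← Finset.mul_prod_erase Finset.univ (fun m => (t + y m)) (Finset.mem_univ j)]
    have key : (t + y j)⁻¹ * (t + y j) = 1 := inv_mul_cancel₀ (ht j)
    linear_combination (-(p j) * ∏ m ∈ Finset.univ.erase j, (t + y m)) * key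
  have hevalG : ∀ t : ℝ, (∀ j, t + y j ≠ 0) →
      G.eval t = ((Mq t).det - (Mt t).det * (Mt t).permanent) * ∏ j, (t + y j) ^ 2 := by
    intro t ht
    rw [hG, Polynomial.eval_sub, Polynomial.eval_mul, hevalP t ht, hevalQ t ht, hevalRp t ht,
      Finset.prod_pow]
    ring
  -- degree bound
  have hdegPj : ∀ j, (Pj j).natDegree ≤ n := by
    intro j
    refine le_trans (Polynomial.natDegree_prod_le _ _) ?_
    have h1 : ∑ m ∈ Finset.univ.erase j, (Polynomial.X + Polynomial.C (y m)).natDegree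
        = ∑ m ∈ Finset.univ.erase j, 1 :=
      Finset.sum_congr rfl fun m _ => Polynomial.natDegree_X_add_C _
    rw [h1, Finset.sum_const, smul_eq_mul, mul_one, Finset.card_erase_of_mem (Finset.mem_univ j),
      Finset.card_univ, Fintype.card_fin]
    omega
  have hdegG : G.natDegree ≤ 2 * n := by
    have hdegP : P.natDegree ≤ 2 * n := by
      refine Polynomial.natDegree_sum_le_of_forall_le _ _ fun j _ => ?_
      refine le_trans (Polynomial.natDegree_C_mul_le _ _) ?_
      refine le_trans Polynomial.natDegree_pow_le ?_
      exact Nat.mul_le_mul_left 2 (hdegPj j)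
    have hdegQ : Q.natDegree ≤ n :=
      Polynomial.natDegree_sum_le_of_forall_le _ _ fun j _ =>
        le_trans (Polynomial.natDegree_C_mul_le _ _) (hdegPj j)
    have hdegRp : Rp.natDegree ≤ n :=
      Polynomial.natDegree_sum_le_of_forall_le _ _ fun j _ =>
        le_trans (Polynomial.natDegree_C_mul_le _ _) (hdegPj j)
    refine le_trans (Polynomial.natDegree_sub_le _ _) ?_
    refine max_le hdegP (le_trans Polynomial.natDegree_mul_le ?_)
    omega
  -- the root set
  have hxsinj : Function.Injective xs := fun a b hab => Fin.succ_injective n (hx hab)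
  have hneg : Function.Injective (fun j : Fin (n+1) => -(y j)) :=
    fun a b hab => hy (neg_injective hab)
  set s : Finset ℝ :=
    (Finset.univ.image fun j => -(y j)) ∪ (Finset.univ.image xs) with hs
  have hdisj : Disjoint (Finset.univ.image fun j : Fin (n+1) => -(y j)) (Finset.univ.image xs) := by
    rw [Finset.disjoint_left]
    rintro r hr hr'
    simp only [Finset.mem_image, Finset.mem_univ, true_and] at hr hr'
    obtain ⟨j, rfl⟩ := hr
    obtain ⟨i, hi⟩ := hr'
    exact h i.succ j (by rw [show x i.succ = xs i from rfl, hi]; ring)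
  have hcards : s.card = 2 * n + 1 := by
    rw [hs, Finset.card_union_of_disjoint hdisj, Finset.card_image_of_injective _ hneg,
      Finset.card_image_of_injective _ hxsinj, Finset.card_univ, Finset.card_univ,
      Fintype.card_fin, Fintype.card_fin]
    omega
  -- evaluations vanish
  have hroots : ∀ r ∈ s, G.eval r = 0 := by
    intro r hr
    rw [hs, Finset.mem_union] at hr
    rcases hr with hr | hr
    · -- r = -(y j)
      simp only [Finset.mem_image, Finset.mem_univ, true_and] at hr
      obtain ⟨j, rfl⟩ := hr
      have hPjval : ∀ j' : Fin (n + 1), j' ≠ j → (Pj j').eval (-(y j)) = 0 := by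
        intro j' hj'
        rw [hevalPj]
        exact Finset.prod_eq_zero (Finset.mem_erase.mpr ⟨Ne.symm hj', Finset.mem_univ j⟩)
          (by ring)
      have hIHj : dq j = d j * p j := by
        have := IH xs (y ∘ j.succAbove) (fun a b => h a.succ (j.succAbove b))
        exact this
      rw [hG, Polynomial.eval_sub, Polynomial.eval_mul, hP, hQ, hRp]
      simp only [Polynomial.eval_finset_sum, Polynomial.eval_mul, Polynomial.eval_C,
        Polynomial.eval_pow]
      rw [Finset.sum_eq_single j (fun j' _ hj' => by rw [hPjval j' hj']; ring)
          (fun hj => absurd (Finset.mem_univ j) hj),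
        Finset.sum_eq_single j (fun j' _ hj' => by rw [hPjval j' hj']; ring)
          (fun hj => absurd (Finset.mem_univ j) hj),
        Finset.sum_eq_single j (fun j' _ hj' => by rw [hPjval j' hj']; ring)
          (fun hj => absurd (Finset.mem_univ j) hj)]
      rw [hIHj]
      ring
    · -- r = xs i
      simp only [Finset.mem_image, Finset.mem_univ, true_and] at hr
      obtain ⟨i, rfl⟩ := hr
      have ht : ∀ j, xs i + y j ≠ 0 := fun j => h i.succ j
      rw [hevalG _ ht]
      have h0succ : (0 : Fin (n + 1)) ≠ i.succ := (Fin.succ_ne_zero i).symm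
      have hq0 : (Mq (xs i)).det = 0 :=
        Matrix.det_zero_of_row_eq h0succ (funext fun j => by simp [hMq])
      have ht0 : (Mt (xs i)).det = 0 :=
        Matrix.det_zero_of_row_eq h0succ (funext fun j => by simp [hMt])
      rw [hq0, ht0]
      ring
  -- conclude G = 0
  have hG0 : G = 0 :=
    Polynomial.eq_zero_of_natDegree_lt_card_of_eval_eq_zero' G s hroots
      (by omega)
  -- evaluate at x 0
  have hx0 : ∀ j, x 0 + y j ≠ 0 := fun j => h 0 j
  have hfin := hevalG (x 0) hx0
  rw [hG0] at hfin
  simp only [Polynomial.eval_zero] at hfin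
  have hprod : (∏ j, (x 0 + y j) ^ 2) ≠ 0 :=
    Finset.prod_ne_zero_iff.mpr fun j _ => pow_ne_zero 2 (hx0 j)
  have hzero : (Mq (x 0)).det - (Mt (x 0)).det * (Mt (x 0)).permanent = 0 := by
    rcases mul_eq_zero.mp hfin.symm with h' | h'
    · exact h'
    · exact absurd h' hprod
  have hcons : Fin.cons (x 0) xs = x := Fin.cons_self_tail x
  rw [hMq, hMt] at hzero
  simp only [hcons] at hzero
  linarith [hzero]

/-- Borchardt's identity. -/
private theorem borchardt : ∀ (m : ℕ) (x y : Fin m → ℝ), (∀ i j, x i + y j ≠ 0) →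
    (Matrix.of fun i j => ((x i + y j)⁻¹) ^ 2).det =
      (Matrix.of fun i j => (x i + y j)⁻¹).det *
        (Matrix.of fun i j => (x i + y j)⁻¹).permanent := by
  intro m
  induction m with
  | zero => intro x y _; simp [Matrix.det_isEmpty, Matrix.permanent_isEmpty]
  | succ n IH => exact fun x y h => borchardt_succ n IH x y h

theorem stmt_7 (n : ℕ) (hn : 0 < n) (M : Matrix (Fin n) (Fin n) ℝ)
    (hrank : M.rank = 2) (hM : ∀ i j, M i j ≠ 0) :
    (Matrix.of fun i j => ((M i j)⁻¹) ^ 2).det =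
      (Matrix.of fun i j => (M i j)⁻¹).det *
        (Matrix.of fun i j => (M i j)⁻¹).permanent := by
  have j0 : Fin n := ⟨0, hn⟩
  set W : Submodule ℝ (Fin n → ℝ) := Submodule.span ℝ (Set.range Mᵀ) with hWdef
  have hW : Module.finrank ℝ W = 2 := by
    exact (Matrix.rank_eq_finrank_span_cols M).symm.trans hrank
  set v : Fin n → ℝ := Mᵀ j0 with hvdef
  have hv : ∀ i, v i ≠ 0 := fun i => hM i j0
  have hvne : v ≠ 0 := fun hc => hv j0 (congrFun hc j0)
  -- find a column not in the span of v
  have hexj1 : ∃ j1, Mᵀ j1 ∉ Submodule.span ℝ {v} := by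
    by_contra hc
    push_neg at hc
    have hle : W ≤ Submodule.span ℝ {v} := by
      rw [hWdef, Submodule.span_le]
      rintro z ⟨j, rfl⟩
      exact hc j
    have := Submodule.finrank_mono hle
    rw [hW, finrank_span_singleton hvne] at this
    omega
  obtain ⟨j1, hj1⟩ := hexj1
  set u0 : Fin n → ℝ := Mᵀ j1 with hu0def
  -- u0, v linearly independent
  have hli : LinearIndependent ℝ ![u0, v] := by
    rw [LinearIndependent.pair_iff]
    intro s t hst
    by_cases hs : s = 0
    · subst hs
      rw [zero_smul, zero_add] at hst
      rcases smul_eq_zero.mp hst with ht | hv0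
      · exact ⟨rfl, ht⟩
      · exact absurd hv0 hvne
    · exfalso
      apply hj1
      have : u0 = (-t / s) • v := by
        have := congrArg (fun z => (s⁻¹ : ℝ) • z) hst
        simp only [smul_add, smul_smul, inv_mul_cancel₀ hs, one_smul, smul_zero] at this
        have h2 : u0 = -((s⁻¹ * t) • v) := by
          rw [eq_neg_iff_add_eq_zero]; exact this
        rw [h2, ← neg_smul]
        congr 1
        field_simp
      rw [this]
      exact Submodule.smul_mem _ _ (Submodule.mem_span_singleton_self v)
  -- every column is a combination of u0 and v
  have hcol : ∀ j, ∃ a b : ℝ, a • u0 + b • v = Mᵀ j := by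
    intro j
    rw [← Submodule.mem_span_pair]
    have hrange : Set.range ![u0, v] = {u0, v} := by
      simp [Matrix.range_cons, Matrix.range_empty, Set.pair_comm]
    have hsub : Submodule.span ℝ {u0, v} ≤ W := by
      rw [Submodule.span_le]
      rintro z hz
      rcases hz with rfl | hz
      · exact Submodule.subset_span ⟨j1, rfl⟩
      · rcases hz with rfl
        exact Submodule.subset_span ⟨j0, rfl⟩
    have hfr : Module.finrank ℝ (Submodule.span ℝ {u0, v}) = 2 := by
      rw [← hrange, finrank_span_eq_card hli, Fintype.card_fin]
    have heq : Submodule.span ℝ {u0, v} = W :=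
      Submodule.eq_of_le_of_finrank_le hsub (by rw [hW, hfr])
    rw [heq]
    exact Submodule.subset_span ⟨j, rfl⟩
  choose c' d' hc'd' using hcol
  -- choose a good ε
  set bad : Finset ℝ := (Finset.univ.image fun j => d' j / c' j)
      ∪ (Finset.univ.image fun i => -(u0 i) / v i) with hbad
  obtain ⟨ε, hε⟩ := Infinite.exists_notMem_finset bad
  have hε1 : ∀ j, ε ≠ d' j / c' j := fun j hc => hε (by
    rw [hbad]; exact Finset.mem_union_left _ (Finset.mem_image.mpr ⟨j, Finset.mem_univ j, hc.symm⟩))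
  have hε2 : ∀ i, ε ≠ -(u0 i) / v i := fun i hc => hε (by
    rw [hbad]; exact Finset.mem_union_right _ (Finset.mem_image.mpr ⟨i, Finset.mem_univ i, hc.symm⟩))
  set u : Fin n → ℝ := fun i => u0 i + ε * v i with hu
  set c : Fin n → ℝ := c' with hc
  set d : Fin n → ℝ := fun j => d' j - ε * c' j with hd
  have hentry : ∀ i j, M i j = c' j * u0 i + d' j * v i := by
    intro i j
    have h0 := congrFun (hc'd' j) i
    simp only [Pi.add_apply, Pi.smul_apply, smul_eq_mul, Matrix.transpose_apply] at h0
    exact h0.symm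
  have hMdec : ∀ i j, M i j = c j * u i + d j * v i := by
    intro i j
    rw [hentry i j, hc, hu, hd]
    ring
  have hune : ∀ i, u i ≠ 0 := by
    intro i hui
    apply hε2 i
    have h0 : u0 i + ε * v i = 0 := hui
    rw [eq_div_iff (hv i)]
    linarith
  have hdne : ∀ j, d j ≠ 0 := by
    intro j hdj
    have h0 : d' j - ε * c' j = 0 := hdj
    by_cases hcj : c' j = 0
    · rw [hcj, mul_zero, sub_zero] at h0
      apply hM j0 j
      rw [hentry j0 j, hcj, h0]
      ring
    · apply hε1 j
      rw [eq_div_iff hcj]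
      linarith
  -- Cauchy form
  set pp : Fin n → ℝ := fun i => v i / u i with hpp
  set qq : Fin n → ℝ := fun j => c j / d j with hqq
  have hsum : ∀ i j, u i * d j * (pp i + qq j) = M i j := by
    intro i j
    rw [hMdec i j]
    show u i * d j * (v i / u i + c j / d j) = c j * u i + d j * v i
    field_simp [hune i, hdne j]
    ring
  have hne : ∀ i j, pp i + qq j ≠ 0 := by
    intro i j hc0
    apply hM i j
    rw [← hsum i j, hc0, mul_zero]
  have hinv : ∀ i j, (M i j)⁻¹ = (u i)⁻¹ * (d j)⁻¹ * (pp i + qq j)⁻¹ := by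
    intro i j
    rw [← hsum i j]
    rw [mul_inv, mul_inv]
  have hB := borchardt n pp qq hne
  have e1 : (Matrix.of fun i j => (M i j)⁻¹)
      = Matrix.of fun i j => (u i)⁻¹ * (d j)⁻¹ * (Matrix.of fun i j => (pp i + qq j)⁻¹) i j := by
    ext i j
    simp [hinv i j]
  have e2 : (Matrix.of fun i j => ((M i j)⁻¹) ^ 2)
      = Matrix.of fun i j => ((u i)⁻¹) ^ 2 * ((d j)⁻¹) ^ 2
          * (Matrix.of fun i j => ((pp i + qq j)⁻¹) ^ 2) i j := by
    ext i j
    simp only [Matrix.of_apply, hinv i j]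
    ring
  rw [e1, e2, det_scale, det_scale, perm_scale, hB]
  rw [Finset.prod_pow, Finset.prod_pow]
  ring
end

section
/- Let n be a positive integer and let u, v ∈ ℝⁿ. Define the n×n matrices A and C by A(i,j) = 1 + u_i v_j and C(i,j) = (1 + u_i v_j)^n. Then n! · det(C) = Δ(u) · Δ(v) · (∏_{j=0}^{n} C(n, j)) · perm(A), where C(n, j) denotes the binomial coefficient (n choose j). -/
open Matrix

lemma aux_exists_perm_image {α : Type*} [DecidableEq α] [Fintype α] {S S' : Finset α}
    (h : S.card = S'.card) : ∃ π : Equiv.Perm α, S.image π = S' := by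
  classical
  have hc : Sᶜ.card = S'ᶜ.card := by simp [Finset.card_compl, h]
  let e : {x // x ∈ S} ≃ {x // x ∈ S'} := Finset.equivOfCardEq h
  let e' : {x // ¬ x ∈ S} ≃ {x // ¬ x ∈ S'} :=
    ((Equiv.subtypeEquivRight (fun x => (Finset.mem_compl).symm)).trans
      (Finset.equivOfCardEq hc)).trans (Equiv.subtypeEquivRight (fun x => Finset.mem_compl))
  refine ⟨(Equiv.sumCompl (· ∈ S)).symm.trans ((e.sumCongr e').trans (Equiv.sumCompl (· ∈ S'))), ?_⟩
  apply Finset.eq_of_subset_of_card_le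
  · intro y hy
    simp only [Finset.mem_image] at hy
    obtain ⟨x, hx, rfl⟩ := hy
    simp only [Equiv.trans_apply, Equiv.sumCompl_symm_apply_of_pos hx, Equiv.sumCongr_apply,
      Sum.map_inl, Equiv.sumCompl_apply_inl]
    exact (e ⟨x, hx⟩).2
  · rw [Finset.card_image_of_injective _ (Equiv.injective _), h]

noncomputable def auxEsym {n : ℕ} (t : ℕ) (x : Fin n → ℝ) : ℝ :=
  ∑ S ∈ Finset.powersetCard t Finset.univ, ∏ i ∈ S, x i

lemma aux_sum_perm_prod {n : ℕ} (v : Fin n → ℝ) (T : Finset (Fin n)) :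
    ∑ σ : Equiv.Perm (Fin n), ∏ i ∈ T, v (σ i)
      = ((T.card.factorial * (n - T.card).factorial : ℕ) : ℝ) * auxEsym T.card v := by
  classical
  set t := T.card with htdef
  have ht : t ≤ n := by
    simpa using T.card_le_univ
  have himg : ∀ σ : Equiv.Perm (Fin n), T.image σ ∈ Finset.powersetCard t Finset.univ := by
    intro σ
    rw [Finset.mem_powersetCard]
    exact ⟨Finset.subset_univ _, Finset.card_image_of_injective _ σ.injective⟩
  have hTmem : T ∈ Finset.powersetCard t Finset.univ := by
    rw [Finset.mem_powersetCard]; exact ⟨Finset.subset_univ _, rfl⟩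
  have hfib : ∀ S ∈ Finset.powersetCard t Finset.univ,
      (Finset.univ.filter fun σ : Equiv.Perm (Fin n) => T.image σ = S).card
        = (Finset.univ.filter fun σ : Equiv.Perm (Fin n) => T.image σ = T).card := by
    intro S hS
    rw [Finset.mem_powersetCard] at hS
    obtain ⟨π, hπ⟩ := aux_exists_perm_image (h := hS.2)
    refine Finset.card_bij' (fun σ _ => σ.trans π) (fun τ _ => τ.trans π⁻¹) ?_ ?_ ?_ ?_
    · intro σ hσ
      simp only [Finset.mem_filter, Finset.mem_univ, true_and] at hσ ⊢
      rw [Equiv.coe_trans, ← Finset.image_image, hσ, hπ]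
    · intro τ hτ
      simp only [Finset.mem_filter, Finset.mem_univ, true_and] at hτ ⊢
      rw [Equiv.coe_trans, ← Finset.image_image, hτ, ← hπ, Finset.image_image,
        show (⇑π⁻¹ ∘ ⇑π) = id from funext fun x => π.symm_apply_apply x, Finset.image_id]
    · intro σ _; ext i; simp [Equiv.Perm.inv_def]
    · intro τ _; ext i; simp [Equiv.Perm.inv_def]
  have hcount : (Finset.univ.filter fun σ : Equiv.Perm (Fin n) => T.image σ = T).card
      = t.factorial * (n - t).factorial := by
    have h1 : (Finset.univ : Finset (Equiv.Perm (Fin n))).card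
        = ∑ S ∈ Finset.powersetCard t Finset.univ,
            (Finset.univ.filter fun σ : Equiv.Perm (Fin n) => T.image σ = S).card :=
      Finset.card_eq_sum_card_fiberwise (fun σ _ => himg σ)
    rw [Finset.card_univ, Fintype.card_perm, Fintype.card_fin] at h1
    rw [Finset.sum_congr rfl hfib, Finset.sum_const, smul_eq_mul,
      Finset.card_powersetCard, Finset.card_univ, Fintype.card_fin] at h1
    have h2 : n.choose t * (t.factorial * (n - t).factorial) = n.factorial := by
      rw [← mul_assoc]; exact Nat.choose_mul_factorial_mul_factorial ht
    exact Nat.eq_of_mul_eq_mul_left (Nat.choose_pos ht) (by rw [h2, ← h1])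
  calc ∑ σ : Equiv.Perm (Fin n), ∏ i ∈ T, v (σ i)
      = ∑ σ : Equiv.Perm (Fin n), ∏ j ∈ T.image σ, v j := by
        refine Finset.sum_congr rfl fun σ _ => ?_
        rw [Finset.prod_image (fun a _ b _ h => σ.injective h)]
    _ = ∑ S ∈ Finset.powersetCard t Finset.univ,
          ∑ σ ∈ Finset.univ.filter fun σ : Equiv.Perm (Fin n) => T.image σ = S,
            ∏ j ∈ T.image σ, v j :=
        (Finset.sum_fiberwise_of_maps_to (fun σ _ => himg σ) _).symm
    _ = ∑ S ∈ Finset.powersetCard t Finset.univ,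
          ((t.factorial * (n - t).factorial : ℕ) : ℝ) * ∏ j ∈ S, v j := by
        refine Finset.sum_congr rfl fun S hS => ?_
        rw [Finset.sum_congr rfl (fun σ hσ => by
          rw [(Finset.mem_filter.mp hσ).2]), Finset.sum_const, hfib S hS, hcount,
          nsmul_eq_mul]
    _ = ((t.factorial * (n - t).factorial : ℕ) : ℝ) * auxEsym t v := by
        rw [auxEsym, Finset.mul_sum]

lemma aux_perm_eq {n : ℕ} (u v : Fin n → ℝ) (A : Matrix (Fin n) (Fin n) ℝ)
    (hA : ∀ i j, A i j = 1 + u i * v j) :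
    A.permanent = ∑ t ∈ Finset.range (n + 1),
      ((t.factorial * (n - t).factorial : ℕ) : ℝ) * (auxEsym t u * auxEsym t v) := by
  classical
  have hcu : (Finset.univ : Finset (Fin n)).card = n := by simp
  calc A.permanent = ∑ σ : Equiv.Perm (Fin n), ∏ i, (v i * u (σ i) + 1) := by
        rw [Matrix.permanent]
        exact Finset.sum_congr rfl fun σ _ => Finset.prod_congr rfl fun i _ => by
          rw [hA]; ring
    _ = ∑ σ : Equiv.Perm (Fin n), ∑ T ∈ Finset.univ.powerset,
          (∏ i ∈ T, (v i * u (σ i))) * ∏ i ∈ Finset.univ \ T, (1 : ℝ) := by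
        exact Finset.sum_congr rfl fun σ _ => Finset.prod_add _ _ _
    _ = ∑ T ∈ Finset.univ.powerset, (∏ i ∈ T, v i) *
          ∑ σ : Equiv.Perm (Fin n), ∏ i ∈ T, u (σ i) := by
        rw [Finset.sum_comm]
        refine Finset.sum_congr rfl fun T _ => ?_
        rw [Finset.mul_sum]
        refine Finset.sum_congr rfl fun σ _ => ?_
        rw [Finset.prod_const_one, mul_one, Finset.prod_mul_distrib]
    _ = ∑ T ∈ Finset.univ.powerset, (∏ i ∈ T, v i) *
          (((T.card.factorial * (n - T.card).factorial : ℕ) : ℝ) * auxEsym T.card u) := by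
        exact Finset.sum_congr rfl fun T _ => by rw [aux_sum_perm_prod]
    _ = ∑ t ∈ Finset.range (n + 1), ∑ T ∈ Finset.powersetCard t Finset.univ,
          (∏ i ∈ T, v i) *
          (((T.card.factorial * (n - T.card).factorial : ℕ) : ℝ) * auxEsym T.card u) := by
        rw [Finset.sum_powerset, hcu]
    _ = ∑ t ∈ Finset.range (n + 1),
          ((t.factorial * (n - t).factorial : ℕ) : ℝ) * (auxEsym t u * auxEsym t v) := by
        refine Finset.sum_congr rfl fun t _ => ?_
        conv_rhs => rw [show auxEsym t v = ∑ T ∈ Finset.powersetCard t Finset.univ, ∏ i ∈ T, v i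
          from rfl, ← mul_assoc, Finset.mul_sum]
        refine Finset.sum_congr rfl fun T hT => ?_
        rw [(Finset.mem_powersetCard.mp hT).2]
        ring

lemma aux_prod_Ioi_castSucc {M : Type*} [CommMonoid M] {n : ℕ} (g : Fin (n + 1) → M) (i : Fin n) :
    ∏ j ∈ Finset.Ioi (Fin.castSucc i), g j
      = g (Fin.last n) * ∏ j ∈ Finset.Ioi i, g (Fin.castSucc j) := by
  have h : Finset.Ioi (Fin.castSucc i)
      = insert (Fin.last n) ((Finset.Ioi i).map Fin.castSuccEmb) := by
    ext j
    simp only [Finset.mem_Ioi, Finset.mem_insert, Finset.mem_map, Fin.coe_castSuccEmb]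
    constructor
    · intro hj
      rcases eq_or_ne j (Fin.last n) with rfl | hne
      · exact Or.inl rfl
      · refine Or.inr ⟨j.castPred hne, ?_, Fin.castSucc_castPred j hne⟩
        rw [← Fin.castSucc_lt_castSucc_iff, Fin.castSucc_castPred]
        exact hj
    · rintro (rfl | ⟨j', hj', rfl⟩)
      · exact Fin.castSucc_lt_last i
      · simpa [Fin.castSucc_lt_castSucc_iff] using hj'
  have hnotmem : Fin.last n ∉ (Finset.Ioi i).map Fin.castSuccEmb := by
    simp only [Finset.mem_map, Fin.coe_castSuccEmb, not_exists]
    rintro j' ⟨_, hc⟩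
    exact absurd hc (Fin.castSucc_lt_last j').ne
  rw [h, Finset.prod_insert hnotmem, Finset.prod_map]
  rfl

open Polynomial in
lemma aux_step_A {n : ℕ} (x : Fin n → ℝ) :
    (Matrix.vandermonde (Fin.snoc (fun i => Polynomial.C (x i)) Polynomial.X
        : Fin (n + 1) → ℝ[X])).det
      = Polynomial.C (vmd x) * ∏ i : Fin n, (Polynomial.X - Polynomial.C (x i)) := by
  set w : Fin (n + 1) → ℝ[X] := Fin.snoc (fun i => Polynomial.C (x i)) Polynomial.X with hw
  rw [Matrix.det_vandermonde, Fin.prod_univ_castSucc]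
  have hlast : ∏ j ∈ Finset.Ioi (Fin.last n), (w j - w (Fin.last n)) = 1 :=
    Finset.prod_eq_one (fun j hj =>
      absurd (Finset.mem_Ioi.mp hj) (Fin.le_last j).not_gt)
  rw [hlast, mul_one]
  have hterm : ∀ i : Fin n, ∏ j ∈ Finset.Ioi (Fin.castSucc i), (w j - w (Fin.castSucc i))
      = (Polynomial.X - Polynomial.C (x i)) *
          ∏ j ∈ Finset.Ioi i, (Polynomial.C (x j) - Polynomial.C (x i)) := by
    intro i
    rw [aux_prod_Ioi_castSucc (fun j => w j - w (Fin.castSucc i)) i]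
    simp only [hw, Fin.snoc_last, Fin.snoc_castSucc]
  rw [Finset.prod_congr rfl (fun i _ => hterm i), Finset.prod_mul_distrib, mul_comm]
  congr 1
  rw [vmd, map_prod]
  refine Finset.prod_congr rfl (fun i _ => ?_)
  rw [map_prod]
  exact Finset.prod_congr rfl (fun j _ => (map_sub _ _ _).symm)

open Polynomial in
lemma aux_gvdm {n : ℕ} (x : Fin n → ℝ) (m : Fin (n + 1)) :
    Matrix.det (Matrix.of fun i i' : Fin n => x i ^ ((m.succAbove i' : Fin (n + 1)) : ℕ))
      = vmd x * auxEsym (n - (m : ℕ)) x := by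
  classical
  set w : Fin (n + 1) → ℝ[X] := Fin.snoc (fun i => Polynomial.C (x i)) Polynomial.X with hw
  set M : Fin (n + 1) → Matrix (Fin n) (Fin n) ℝ :=
    fun j => Matrix.of fun i i' : Fin n => x i ^ ((j.succAbove i' : Fin (n + 1)) : ℕ) with hM
  have hsub : ∀ j : Fin (n + 1),
      (Matrix.vandermonde w).submatrix (Fin.last n).succAbove j.succAbove
        = (Polynomial.C : ℝ →+* ℝ[X]).mapMatrix (M j) := by
    intro j
    ext i i'
    simp only [Matrix.submatrix_apply, Matrix.vandermonde_apply, RingHom.mapMatrix_apply,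
      Matrix.map_apply, hM, Matrix.of_apply, Fin.succAbove_last, hw, Fin.snoc_castSucc, map_pow]
  have hrow := Matrix.det_succ_row (Matrix.vandermonde w) (Fin.last n)
  have hterm : ∀ j : Fin (n + 1),
      ((-1 : ℝ[X]) ^ ((Fin.last n : ℕ) + (j : ℕ)) * Matrix.vandermonde w (Fin.last n) j *
        ((Matrix.vandermonde w).submatrix (Fin.last n).succAbove j.succAbove).det)
      = Polynomial.C ((-1) ^ (n + (j : ℕ)) * (M j).det) * Polynomial.X ^ (j : ℕ) := by
    intro j
    rw [hsub j, ← RingHom.map_det, Matrix.vandermonde_apply, hw, Fin.snoc_last, Fin.val_last,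
      _root_.map_mul, _root_.map_pow, _root_.map_neg, _root_.map_one]
    ring
  have hcoeff1 : (Matrix.vandermonde w).det.coeff (m : ℕ) = (-1) ^ (n + (m : ℕ)) * (M m).det := by
    rw [hrow, Finset.sum_congr rfl (fun j _ => hterm j), Polynomial.finset_sum_coeff]
    rw [Finset.sum_eq_single m]
    · rw [Polynomial.coeff_C_mul, Polynomial.coeff_X_pow, if_pos rfl, mul_one]
    · intro j _ hj
      rw [Polynomial.coeff_C_mul, Polynomial.coeff_X_pow,
        if_neg (fun h => hj (Fin.ext h.symm)), mul_zero]
    · intro h; exact absurd (Finset.mem_univ m) h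
  have hms : Multiset.card (Multiset.map x Finset.univ.val) = n := by simp
  have hcoeff2 : (Matrix.vandermonde w).det.coeff (m : ℕ)
      = vmd x * ((-1) ^ (n - (m : ℕ)) * auxEsym (n - (m : ℕ)) x) := by
    rw [aux_step_A, Polynomial.coeff_C_mul]
    have hprod : (∏ i : Fin n, (Polynomial.X - Polynomial.C (x i)))
        = ((Multiset.map x Finset.univ.val).map fun t => Polynomial.X - Polynomial.C t).prod := by
      rw [Multiset.map_map]; rfl
    rw [hprod, Multiset.prod_X_sub_C_coeff _ (by rw [hms]; exact m.is_le), hms,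
      Finset.esymm_map_val]
    rfl
  have hle : (m : ℕ) ≤ n := m.is_le
  have hpar : ((-1 : ℝ)) ^ (n + (m : ℕ)) = (-1) ^ (n - (m : ℕ)) := by
    rw [show n + (m : ℕ) = (n - (m : ℕ)) + 2 * (m : ℕ) by omega, pow_add, pow_mul]
    simp
  have hcc := hcoeff1.symm.trans hcoeff2
  rw [hpar] at hcc
  have hne : ((-1 : ℝ)) ^ (n - (m : ℕ)) ≠ 0 := pow_ne_zero _ (by norm_num)
  exact mul_left_cancel₀ hne (by rw [hcc]; ring : (-1 : ℝ) ^ (n - (m : ℕ)) * (M m).det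
    = (-1 : ℝ) ^ (n - (m : ℕ)) * (vmd x * auxEsym (n - (m : ℕ)) x))

lemma aux_sum_inj {n : ℕ} (T : (Fin n → Fin (n + 1)) → ℝ)
    (hz : ∀ p, ¬ Function.Injective p → T p = 0) :
    ∑ p : Fin n → Fin (n + 1), T p
      = ∑ q : Fin (n + 1) × Equiv.Perm (Fin n), T (fun i => q.1.succAbove (q.2 i)) := by
  classical
  rw [← Finset.sum_filter_of_ne (p := fun p : Fin n → Fin (n + 1) => Function.Injective p)
    (fun p _ h => by by_contra hni; exact h (hz p hni))]
  symm
  refine Finset.sum_bij (fun q (_ : q ∈ Finset.univ) => fun i => q.1.succAbove (q.2 i))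
    ?_ ?_ ?_ ?_
  · intro q _
    simp only [Finset.mem_filter, Finset.mem_univ, true_and]
    exact fun a b hab => q.2.injective (Fin.succAbove_right_injective hab)
  · rintro ⟨m, σ⟩ _ ⟨m', σ'⟩ _ hq
    have hfun : ∀ i, m.succAbove (σ i) = m'.succAbove (σ' i) := fun i => congrFun hq i
    have hmm : m = m' := by
      by_contra hne
      obtain ⟨z, hz'⟩ := Fin.exists_succAbove_eq hne
      exact Fin.succAbove_ne m (σ (σ'.symm z))
        (by rw [hfun (σ'.symm z), Equiv.apply_symm_apply, hz'])
    subst hmm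
    have hσ : σ = σ' := Equiv.ext fun i => Fin.succAbove_right_injective (hfun i)
    rw [hσ]
  · intro p hp
    simp only [Finset.mem_filter, Finset.mem_univ, true_and] at hp
    have hns : ¬ Function.Surjective p := by
      intro hs
      have := Fintype.card_le_of_surjective p hs
      simp [Fintype.card_fin] at this
    rw [Function.Surjective] at hns
    push_neg at hns
    obtain ⟨m, hm⟩ := hns
    have hex : ∀ i, ∃ z, m.succAbove z = p i := fun i => Fin.exists_succAbove_eq (hm i)
    have hg : ∀ i, m.succAbove ((hex i).choose) = p i := fun i => (hex i).choose_spec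
    have hginj : Function.Injective fun i => (hex i).choose := by
      intro a b hab
      apply hp
      rw [← hg a, ← hg b]
      exact congrArg m.succAbove hab
    refine ⟨⟨m, Equiv.ofBijective _ (Finite.injective_iff_bijective.mp hginj)⟩,
      Finset.mem_univ _, ?_⟩
    funext i
    exact hg i
  · intro q _
    rfl

lemma aux_rows {n : ℕ} (u v : Fin n → ℝ) (C : Matrix (Fin n) (Fin n) ℝ)
    (hC : ∀ i j, C i j = (1 + u i * v j) ^ n) :
    C.det = ∑ p : Fin n → Fin (n + 1),
      (∏ i, ((n.choose ((p i : ℕ)) : ℝ) * u i ^ ((p i : ℕ)))) *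
        (Matrix.of fun i j => v j ^ ((p i : ℕ)) : Matrix (Fin n) (Fin n) ℝ).det := by
  have hrow : ∀ i, C i = ∑ k : Fin (n + 1),
      ((n.choose (k : ℕ) : ℝ) * u i ^ (k : ℕ)) • (fun j => v j ^ (k : ℕ)) := by
    intro i; funext j
    rw [Finset.sum_apply, hC, add_comm, add_pow, ← Fin.sum_univ_eq_sum_range
      (fun k => (u i * v j) ^ k * 1 ^ (n - k) * (n.choose k : ℝ))]
    refine Finset.sum_congr rfl (fun k _ => ?_)
    simp only [Pi.smul_apply, smul_eq_mul, one_pow, mul_one, mul_pow]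
    ring
  have h0 : C.det = Matrix.detRowAlternating (fun i => ∑ k : Fin (n + 1),
      ((n.choose (k : ℕ) : ℝ) * u i ^ (k : ℕ)) • (fun j => v j ^ (k : ℕ))) := by
    congr 1
    funext i
    exact hrow i
  rw [h0, ← AlternatingMap.coe_multilinearMap, MultilinearMap.map_sum]
  refine Finset.sum_congr rfl (fun p _ => ?_)
  rw [MultilinearMap.map_smul_univ]
  rfl

lemma aux_detC_eq {n : ℕ} (u v : Fin n → ℝ) (C : Matrix (Fin n) (Fin n) ℝ)
    (hC : ∀ i j, C i j = (1 + u i * v j) ^ n) :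
    C.det = ∑ m : Fin (n + 1),
      (∏ i : Fin n, (n.choose ((m.succAbove i : Fin (n + 1)) : ℕ) : ℝ)) *
        ((Matrix.of fun a b : Fin n => u b ^ ((m.succAbove a : Fin (n + 1)) : ℕ)).det *
         (Matrix.of fun a b : Fin n => v b ^ ((m.succAbove a : Fin (n + 1)) : ℕ)).det) := by
  classical
  set T : (Fin n → Fin (n + 1)) → ℝ := fun p =>
    (∏ i, ((n.choose ((p i : ℕ)) : ℝ) * u i ^ ((p i : ℕ)))) *
      (Matrix.of fun i j => v j ^ ((p i : ℕ)) : Matrix (Fin n) (Fin n) ℝ).det with hT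
  have hz : ∀ p, ¬ Function.Injective p → T p = 0 := by
    intro p hp
    rw [Function.Injective] at hp
    push_neg at hp
    obtain ⟨a, b, hab, hne⟩ := hp
    have : (Matrix.of fun i j => v j ^ ((p i : ℕ)) : Matrix (Fin n) (Fin n) ℝ).det = 0 :=
      Matrix.det_zero_of_row_eq hne (by funext j; simp [hab])
    rw [hT]
    simp only [this, mul_zero]
  rw [aux_rows u v C hC, show ∑ p : Fin n → Fin (n + 1),
      (∏ i, ((n.choose ((p i : ℕ)) : ℝ) * u i ^ ((p i : ℕ)))) *
        (Matrix.of fun i j => v j ^ ((p i : ℕ)) : Matrix (Fin n) (Fin n) ℝ).det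
      = ∑ p : Fin n → Fin (n + 1), T p from rfl, aux_sum_inj T hz, Fintype.sum_prod_type]
  refine Finset.sum_congr rfl (fun m _ => ?_)
  have hVperm : ∀ σ : Equiv.Perm (Fin n),
      (Matrix.of fun i j => v j ^ ((m.succAbove (σ i) : Fin (n + 1)) : ℕ)
          : Matrix (Fin n) (Fin n) ℝ).det
        = (Equiv.Perm.sign σ : ℝ) *
          (Matrix.of fun a b : Fin n => v b ^ ((m.succAbove a : Fin (n + 1)) : ℕ)).det := by
    intro σ
    have : (Matrix.of fun i j => v j ^ ((m.succAbove (σ i) : Fin (n + 1)) : ℕ)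
          : Matrix (Fin n) (Fin n) ℝ)
        = (Matrix.of fun a b : Fin n => v b ^ ((m.succAbove a : Fin (n + 1)) : ℕ)).submatrix
            σ id := by
      ext i j; simp [Matrix.submatrix_apply]
    rw [this, Matrix.det_permute]
  calc ∑ σ : Equiv.Perm (Fin n), T (fun i => m.succAbove (σ i))
      = ∑ σ : Equiv.Perm (Fin n),
          (∏ i : Fin n, (n.choose ((m.succAbove i : Fin (n + 1)) : ℕ) : ℝ)) *
          ((Matrix.of fun a b : Fin n => v b ^ ((m.succAbove a : Fin (n + 1)) : ℕ)).det *
            ((Equiv.Perm.sign σ : ℝ) *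
              ∏ i : Fin n, u i ^ ((m.succAbove (σ i) : Fin (n + 1)) : ℕ))) := by
        refine Finset.sum_congr rfl (fun σ _ => ?_)
        rw [hT]
        simp only []
        rw [hVperm σ, Finset.prod_mul_distrib,
          Equiv.prod_comp σ (fun k => (n.choose ((m.succAbove k : Fin (n + 1)) : ℕ) : ℝ))]
        ring
    _ = (∏ i : Fin n, (n.choose ((m.succAbove i : Fin (n + 1)) : ℕ) : ℝ)) *
        ((Matrix.of fun a b : Fin n => u b ^ ((m.succAbove a : Fin (n + 1)) : ℕ)).det *
         (Matrix.of fun a b : Fin n => v b ^ ((m.succAbove a : Fin (n + 1)) : ℕ)).det) := by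
        rw [← Finset.mul_sum, ← Finset.mul_sum,
          Matrix.det_apply' (Matrix.of fun a b : Fin n =>
            u b ^ ((m.succAbove a : Fin (n + 1)) : ℕ))]
        simp only [Matrix.of_apply]
        ring

theorem stmt_8 (n : ℕ) (hn : 0 < n) (u v : Fin n → ℝ)
    (A C : Matrix (Fin n) (Fin n) ℝ)
    (hA : ∀ i j, A i j = 1 + u i * v j)
    (hC : ∀ i j, C i j = (1 + u i * v j) ^ n) :
    (n.factorial : ℝ) * C.det =
      vmd u * vmd v * (∏ j ∈ Finset.range (n + 1), (n.choose j : ℝ)) *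
        A.permanent := by
  classical
  have hU : ∀ (x : Fin n → ℝ) (m : Fin (n + 1)),
      (Matrix.of fun a b : Fin n => x b ^ ((m.succAbove a : Fin (n + 1)) : ℕ)).det
        = vmd x * auxEsym (n - (m : ℕ)) x := by
    intro x m
    rw [← Matrix.det_transpose, ← aux_gvdm x m]
    congr 1
  set PallR : ℝ := ∏ j ∈ Finset.range (n + 1), (n.choose j : ℝ) with hPall
  have hkey : ∀ m : Fin (n + 1),
      (n.factorial : ℝ) * ((∏ i : Fin n, (n.choose ((m.succAbove i : Fin (n + 1)) : ℕ) : ℝ)) *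
        ((vmd u * auxEsym (n - (m : ℕ)) u) * (vmd v * auxEsym (n - (m : ℕ)) v)))
      = vmd u * vmd v * PallR *
          ((((n - (m : ℕ)).factorial * (n - (n - (m : ℕ))).factorial : ℕ) : ℝ) *
            (auxEsym (n - (m : ℕ)) u * auxEsym (n - (m : ℕ)) v)) := by
    intro m
    have hle : (m : ℕ) ≤ n := m.is_le
    have h1 : PallR = (n.choose (m : ℕ) : ℝ) *
        ∏ i : Fin n, (n.choose ((m.succAbove i : Fin (n + 1)) : ℕ) : ℝ) := by
      rw [hPall, ← Fin.prod_univ_eq_prod_range (fun j => (n.choose j : ℝ)) (n + 1),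
        Fin.prod_univ_succAbove (fun j : Fin (n + 1) => (n.choose (j : ℕ) : ℝ)) m]
    have h2 : (n.factorial : ℝ)
        = (n.choose (m : ℕ) : ℝ) * ((m : ℕ).factorial : ℝ) * ((n - (m : ℕ)).factorial : ℝ) := by
      rw [← Nat.cast_mul, ← Nat.cast_mul, Nat.choose_mul_factorial_mul_factorial hle]
    have h3 : n - (n - (m : ℕ)) = (m : ℕ) := by omega
    rw [h1, h2, h3]
    push_cast
    ring
  calc (n.factorial : ℝ) * C.det
      = ∑ m : Fin (n + 1), (fun k : ℕ => vmd u * vmd v * PallR *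
          ((((n - k).factorial * (n - (n - k)).factorial : ℕ) : ℝ) *
            (auxEsym (n - k) u * auxEsym (n - k) v))) (m : ℕ) := by
        rw [aux_detC_eq u v C hC, Finset.mul_sum]
        refine Finset.sum_congr rfl (fun m _ => ?_)
        rw [hU u m, hU v m]
        exact hkey m
    _ = ∑ k ∈ Finset.range (n + 1), vmd u * vmd v * PallR *
          ((((n - k).factorial * (n - (n - k)).factorial : ℕ) : ℝ) *
            (auxEsym (n - k) u * auxEsym (n - k) v)) := by
        exact Fin.sum_univ_eq_sum_range (fun k : ℕ => vmd u * vmd v * PallR *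
          ((((n - k).factorial * (n - (n - k)).factorial : ℕ) : ℝ) *
            (auxEsym (n - k) u * auxEsym (n - k) v))) (n + 1)
    _ = ∑ t ∈ Finset.range (n + 1), vmd u * vmd v * PallR *
          (((t.factorial * (n - t).factorial : ℕ) : ℝ) * (auxEsym t u * auxEsym t v)) := by
        rw [← Finset.sum_range_reflect]
        refine Finset.sum_congr rfl (fun t ht => ?_)
        rw [Finset.mem_range] at ht
        have h4 : n + 1 - 1 - t = n - t := by omega
        have h5 : n - (n - t) = t := by omega
        rw [h4, h5]
    _ = vmd u * vmd v * PallR * A.permanent := by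
        rw [aux_perm_eq u v A hA, Finset.mul_sum]
end
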